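/- arXiv:1508.00176 — 6 statements merged into one kernel-verified Lean document; each statement's English description precedes it below -/
import Mathlib

section
/- If f : ℝ → ℝ satisfies lim_{x→∞} f(x) = 0, and there exists λ > 1 and l ∈ ℝ such that lim_{x→∞} x^λ (f(x) - f(x+1)) = l, then lim_{x→∞} x^(λ-1) f(x) = l/(λ-1). -/
open Filter Real Finset

-- MVT bound lemma
lemma gdiff_bounds (lam : ℝ) (hlam : 1 < lam) {a : ℝ} (ha : 0 < a) :
    (a + 1) ^ (-lam) ≤ a ^ (1 - lam) / (lam - 1) - (a + 1) ^ (1 - lam) / (lam - 1) ∧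
      a ^ (1 - lam) / (lam - 1) - (a + 1) ^ (1 - lam) / (lam - 1) ≤ a ^ (-lam) := by
  set g : ℝ → ℝ := fun t => t ^ (1 - lam) / (lam - 1) with hg
  have hderiv : ∀ t ∈ Set.Ioo a (a + 1), HasDerivAt g (-(t ^ (-lam))) t := by
    intro t ht
    have ht0 : 0 < t := lt_trans ha ht.1
    have := (Real.hasDerivAt_rpow_const (x := t) (p := 1 - lam) (Or.inl ht0.ne')).div_const (lam - 1)
    refine this.congr_deriv ?_
    symm
    rw [show 1 - lam - 1 = -lam by ring, eq_div_iff (show lam - 1 ≠ 0 by linarith)]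
    ring
  have hcont : ContinuousOn g (Set.Icc a (a + 1)) := by
    intro t ht
    have ht0 : 0 < t := lt_of_lt_of_le ha ht.1
    have := (Real.hasDerivAt_rpow_const (x := t) (p := 1 - lam) (Or.inl ht0.ne')).div_const (lam - 1)
    exact this.continuousAt.continuousWithinAt
  obtain ⟨c, hc, hceq⟩ := exists_hasDerivAt_eq_slope g (fun t => -(t ^ (-lam)))
    (by linarith : a < a + 1) hcont hderiv
  have hc0 : 0 < c := lt_trans ha hc.1
  have key : g a - g (a + 1) = c ^ (-lam) := by
    have : -(c ^ (-lam)) = (g (a + 1) - g a) / 1 := by rw [hceq]; ring_nf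
    rw [div_one] at this
    linarith
  constructor
  · rw [show a ^ (1 - lam) / (lam - 1) - (a + 1) ^ (1 - lam) / (lam - 1) = g a - g (a+1) from rfl, key]
    exact Real.rpow_le_rpow_of_nonpos hc0 hc.2.le (by linarith)
  · rw [show a ^ (1 - lam) / (lam - 1) - (a + 1) ^ (1 - lam) / (lam - 1) = g a - g (a+1) from rfl, key]
    exact Real.rpow_le_rpow_of_nonpos ha hc.1.le (by linarith)

lemma sum_bounds (lam : ℝ) (hlam : 1 < lam) {x : ℝ} (hx : 1 < x) (n : ℕ) :
    x ^ (1 - lam) / (lam - 1) - (x + n) ^ (1 - lam) / (lam - 1) ≤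
        ∑ k ∈ range n, (x + k) ^ (-lam) ∧
      ∑ k ∈ range n, (x + k) ^ (-lam) ≤ (x - 1) ^ (1 - lam) / (lam - 1) := by
  set G : ℝ → ℝ := fun t => t ^ (1 - lam) / (lam - 1) with hG
  constructor
  · have step : ∀ k : ℕ, G (x + k) - G (x + (k + 1 : ℕ)) ≤ (x + k) ^ (-lam) := by
      intro k
      have hk : (0:ℝ) ≤ (k:ℝ) := k.cast_nonneg
      have ha : (0:ℝ) < x + k := by linarith
      have := (gdiff_bounds lam hlam ha).2
      push_cast
      rw [show x + ((k:ℝ) + 1) = x + k + 1 by ring]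
      exact this
    calc G x - G (x + n) = ∑ k ∈ range n, (G (x + k) - G (x + (k + 1 : ℕ))) := by
          rw [Finset.sum_range_sub' (fun k : ℕ => G (x + k)) n]; norm_num
      _ ≤ ∑ k ∈ range n, (x + k) ^ (-lam) := Finset.sum_le_sum fun k _ => step k
  · have step : ∀ k : ℕ, (x + k) ^ (-lam) ≤ G (x - 1 + k) - G (x - 1 + (k + 1 : ℕ)) := by
      intro k
      have hk : (0:ℝ) ≤ (k:ℝ) := k.cast_nonneg
      have ha : (0:ℝ) < x - 1 + k := by linarith
      have := (gdiff_bounds lam hlam ha).1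
      simp only [hG]
      push_cast
      rw [show x - 1 + ((k:ℝ) + 1) = x - 1 + k + 1 by ring,
        show x + (k:ℝ) = x - 1 + k + 1 by ring]
      exact this
    have htel : ∑ k ∈ range n, (G (x - 1 + k) - G (x - 1 + (k + 1 : ℕ))) =
        G (x - 1) - G (x - 1 + n) := by
      rw [Finset.sum_range_sub' (fun k : ℕ => G (x - 1 + k)) n]; norm_num
    have hnn : 0 ≤ G (x - 1 + n) := by
      have : (0:ℝ) ≤ x - 1 + n := by have : (0:ℝ) ≤ (n:ℝ) := n.cast_nonneg; linarith
      exact div_nonneg (Real.rpow_nonneg this _) (by linarith)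
    calc ∑ k ∈ range n, (x + k) ^ (-lam)
        ≤ ∑ k ∈ range n, (G (x - 1 + k) - G (x - 1 + (k + 1 : ℕ))) :=
          Finset.sum_le_sum fun k _ => step k
      _ = G (x - 1) - G (x - 1 + n) := htel
      _ ≤ G (x - 1) := by linarith

lemma summable_shift (lam : ℝ) (hlam : 1 < lam) {x : ℝ} (hx : 1 < x) :
    Summable (fun k : ℕ => (x + k) ^ (-lam)) := by
  apply summable_of_sum_range_le (c := (x - 1) ^ (1 - lam) / (lam - 1))
  · intro k
    have hk : (0:ℝ) ≤ (k:ℝ) := k.cast_nonneg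
    exact Real.rpow_nonneg (by linarith) _
  · intro n
    exact (sum_bounds lam hlam hx n).2

lemma tsum_bounds (lam : ℝ) (hlam : 1 < lam) {x : ℝ} (hx : 1 < x) :
    x ^ (1 - lam) / (lam - 1) ≤ ∑' k : ℕ, (x + k) ^ (-lam) ∧
      ∑' k : ℕ, (x + k) ^ (-lam) ≤ (x - 1) ^ (1 - lam) / (lam - 1) := by
  have hnn : ∀ k : ℕ, 0 ≤ (x + k) ^ (-lam) := fun k => by
    have hk : (0:ℝ) ≤ (k:ℝ) := k.cast_nonneg
    exact Real.rpow_nonneg (by linarith) _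
  constructor
  · have hQle : ∀ n : ℕ, x ^ (1 - lam) / (lam - 1) - (x + n) ^ (1 - lam) / (lam - 1) ≤
        ∑' k : ℕ, (x + k) ^ (-lam) := fun n =>
      le_trans (sum_bounds lam hlam hx n).1
        (Summable.sum_le_tsum (range n) (fun i _ => hnn i) (summable_shift lam hlam hx))
    have hlim : Tendsto (fun n : ℕ => x ^ (1 - lam) / (lam - 1) - (x + n) ^ (1 - lam) / (lam - 1))
        atTop (nhds (x ^ (1 - lam) / (lam - 1))) := by
      have h1 : Tendsto (fun n : ℕ => x + (n : ℝ)) atTop atTop :=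
        tendsto_atTop_add_const_left _ _ tendsto_natCast_atTop_atTop
      have h2 : Tendsto (fun n : ℕ => (x + (n : ℝ)) ^ (1 - lam) / (lam - 1)) atTop (nhds 0) := by
        have h3 := (tendsto_rpow_neg_atTop (by linarith : (0:ℝ) < lam - 1)).comp h1
        rw [show -(lam - 1) = 1 - lam by ring] at h3
        simpa using h3.div_const (lam - 1)
      simpa using tendsto_const_nhds.sub h2
    exact le_of_tendsto hlim (Eventually.of_forall hQle)
  · exact Real.tsum_le_of_sum_range_le hnn fun n => (sum_bounds lam hlam hx n).2

lemma key_est (f : ℝ → ℝ) (lam l : ℝ) (hlam : 1 < lam)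
    (hf : Tendsto f atTop (nhds 0)) {x ε : ℝ} (hx : 1 < x) (hε : 0 ≤ ε)
    (hclose : ∀ y : ℝ, x ≤ y → |y ^ lam * (f y - f (y + 1)) - l| ≤ ε) :
    |f x - l * ∑' k : ℕ, (x + k) ^ (-lam)| ≤ ε * ∑' k : ℕ, (x + k) ^ (-lam) := by
  have hsum := summable_shift lam hlam hx
  set S := ∑' k : ℕ, (x + k) ^ (-lam) with hS
  set Q : ℕ → ℝ := fun n => ∑ k ∈ range n, (x + k) ^ (-lam) with hQdef
  set P : ℕ → ℝ := fun n => ∑ k ∈ range n, (f (x + k) - f (x + k + 1)) with hPdef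
  have hPeq : ∀ n, P n = f x - f (x + n) := by
    intro n
    calc P n = ∑ k ∈ range n, (f (x + k) - f (x + ((k + 1 : ℕ) : ℝ))) := by
          refine Finset.sum_congr rfl fun k _ => ?_
          push_cast
          ring_nf
      _ = f (x + ((0 : ℕ) : ℝ)) - f (x + n) := Finset.sum_range_sub' (fun k : ℕ => f (x + k)) n
      _ = f x - f (x + n) := by norm_num
  have hP : Tendsto P atTop (nhds (f x)) := by
    have h1 : Tendsto (fun n : ℕ => x + (n : ℝ)) atTop atTop :=
      tendsto_atTop_add_const_left _ _ tendsto_natCast_atTop_atTop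
    have h2 : Tendsto (fun n : ℕ => f (x + n)) atTop (nhds 0) := hf.comp h1
    have h3 : Tendsto (fun n : ℕ => f x - f (x + n)) atTop (nhds (f x)) := by
      simpa using tendsto_const_nhds.sub h2
    exact h3.congr fun n => (hPeq n).symm
  have hQ : Tendsto Q atTop (nhds S) := hsum.hasSum.tendsto_sum_nat
  have hnn : ∀ k : ℕ, 0 ≤ (x + k) ^ (-lam) := fun k => by
    have hk : (0:ℝ) ≤ (k:ℝ) := k.cast_nonneg
    exact Real.rpow_nonneg (by linarith) _
  have hterm : ∀ k : ℕ, |(f (x + k) - f (x + k + 1)) - l * (x + k) ^ (-lam)| ≤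
      ε * (x + k) ^ (-lam) := by
    intro k
    have hk : (0:ℝ) ≤ (k:ℝ) := k.cast_nonneg
    set y := x + (k:ℝ) with hy
    have hy0 : 0 < y := by rw [hy]; linarith
    have hc := hclose y (by rw [hy]; linarith)
    have hne : y ^ lam ≠ 0 := (Real.rpow_pos_of_pos hy0 lam).ne'
    have hid : (f y - f (y + 1)) - l * y ^ (-lam) =
        (y ^ lam * (f y - f (y + 1)) - l) * y ^ (-lam) := by
      rw [Real.rpow_neg hy0.le]
      field_simp
    rw [hid, abs_mul, abs_of_nonneg (Real.rpow_nonneg hy0.le _)]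
    exact mul_le_mul_of_nonneg_right hc (Real.rpow_nonneg hy0.le _)
  have hn : ∀ n, |P n - l * Q n| ≤ ε * Q n := by
    intro n
    have h1 : P n - l * Q n =
        ∑ k ∈ range n, ((f (x + k) - f (x + k + 1)) - l * (x + k) ^ (-lam)) := by
      rw [hPdef, hQdef, Finset.mul_sum, ← Finset.sum_sub_distrib]
    rw [h1, hQdef, Finset.mul_sum]
    exact le_trans (Finset.abs_sum_le_sum_abs _ _) (Finset.sum_le_sum fun k _ => hterm k)
  have hA : Tendsto (fun n => |P n - l * Q n|) atTop (nhds (|f x - l * S|)) :=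
    ((hP.sub (hQ.const_mul l)).abs)
  have hB : Tendsto (fun n => ε * Q n) atTop (nhds (ε * S)) := hQ.const_mul ε
  exact le_of_tendsto_of_tendsto' hA hB hn

theorem stmt_0 (f : ℝ → ℝ) (lam l : ℝ) (hlam : 1 < lam)
    (hf : Tendsto f atTop (nhds 0))
    (h : Tendsto (fun x : ℝ => x ^ lam * (f x - f (x + 1))) atTop (nhds l)) :
    Tendsto (fun x : ℝ => x ^ (lam - 1) * f x) atTop (nhds (l / (lam - 1))) := by
  have hμ : 0 < lam - 1 := by linarith
  set B : ℝ → ℝ := fun x => x ^ (lam - 1) * ((x - 1) ^ (1 - lam) / (lam - 1)) with hBdef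
  have hB : Tendsto B atTop (nhds (1 / (lam - 1))) := by
    have h1 : Tendsto (fun x : ℝ => x - 1) atTop atTop :=
      tendsto_atTop_add_const_right _ _ tendsto_id
    have hq : Tendsto (fun x : ℝ => x / (x - 1)) atTop (nhds 1) := by
      have h2 : Tendsto (fun x : ℝ => 1 + (x - 1)⁻¹) atTop (nhds 1) := by
        simpa using tendsto_const_nhds.add (tendsto_inv_atTop_zero.comp h1)
      apply h2.congr'
      filter_upwards [eventually_gt_atTop (1 : ℝ)] with x hx
      have : x - 1 ≠ 0 := by linarith
      field_simp
      ring
    have hq2 : Tendsto (fun x : ℝ => (x / (x - 1)) ^ (lam - 1)) atTop (nhds 1) := by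
      have := (Real.continuousAt_rpow_const 1 (lam - 1) (Or.inl one_ne_zero)).tendsto.comp hq
      simpa [Function.comp_def] using this
    have hq3 := hq2.div_const (lam - 1)
    apply hq3.congr'
    filter_upwards [eventually_gt_atTop (1 : ℝ)] with x hx
    have hx0 : (0:ℝ) ≤ x := by linarith
    have hx1 : (0:ℝ) ≤ x - 1 := by linarith
    rw [hBdef]
    simp only
    rw [Real.div_rpow hx0 hx1, show 1 - lam = -(lam - 1) by ring, Real.rpow_neg hx1]
    ring
  rw [Metric.tendsto_atTop]
  intro ε hε
  set ε₁ := ε / (2 * (1 / (lam - 1) + 1)) with hε₁def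
  have hC : 0 < 1 / (lam - 1) + 1 := by positivity
  have hε₁ : 0 < ε₁ := by positivity
  obtain ⟨X₁, hX₁⟩ := (Metric.tendsto_atTop.mp h) ε₁ hε₁
  have hev : ∀ᶠ x : ℝ in atTop,
      B x ≤ 1 / (lam - 1) + 1 ∧ (|l| + 1) * |B x - 1 / (lam - 1)| < ε / 2 ∧ 2 ≤ x ∧ X₁ ≤ x := by
    have e1 : ∀ᶠ x : ℝ in atTop, B x ≤ 1 / (lam - 1) + 1 :=
      hB.eventually (eventually_le_nhds (by linarith))
    have e2 : ∀ᶠ x : ℝ in atTop, (|l| + 1) * |B x - 1 / (lam - 1)| < ε / 2 := by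
      have habs : Tendsto (fun x => (|l| + 1) * |B x - 1 / (lam - 1)|) atTop (nhds 0) := by
        have := ((hB.sub_const (1 / (lam - 1))).abs).const_mul (|l| + 1)
        simpa using this
      have := habs.eventually (eventually_lt_nhds (by linarith : (0:ℝ) < ε / 2))
      simpa using this
    filter_upwards [e1, e2, eventually_ge_atTop (2:ℝ), eventually_ge_atTop X₁] with x h1 h2 h3 h4
    exact ⟨h1, h2, h3, h4⟩
  obtain ⟨N, hN⟩ := eventually_atTop.mp hev
  refine ⟨N, fun x hxN => ?_⟩
  obtain ⟨hB1, hB2, hx2, hXx⟩ := hN x hxN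
  have hx1 : (1:ℝ) < x := by linarith
  have hx0 : (0:ℝ) < x := by linarith
  have hclose : ∀ y : ℝ, x ≤ y → |y ^ lam * (f y - f (y + 1)) - l| ≤ ε₁ := by
    intro y hy
    have := hX₁ y (le_trans hXx hy)
    rw [Real.dist_eq] at this
    exact this.le
  set S := ∑' k : ℕ, (x + k) ^ (-lam) with hSdef
  have hkey := key_est f lam l hlam hf hx1 hε₁.le hclose
  obtain ⟨hSlo, hShi⟩ := tsum_bounds lam hlam hx1
  have hxp : 0 < x ^ (lam - 1) := Real.rpow_pos_of_pos hx0 _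
  have hone : x ^ (lam - 1) * (x ^ (1 - lam) / (lam - 1)) = 1 / (lam - 1) := by
    rw [mul_div_assoc', ← Real.rpow_add hx0]
    norm_num
  have hSB : x ^ (lam - 1) * S ≤ B x :=
    mul_le_mul_of_nonneg_left hShi hxp.le
  have hSG : 1 / (lam - 1) ≤ x ^ (lam - 1) * S := by
    rw [← hone]
    exact mul_le_mul_of_nonneg_left hSlo hxp.le
  rw [Real.dist_eq]
  have hdecomp : x ^ (lam - 1) * f x - l / (lam - 1) =
      x ^ (lam - 1) * (f x - l * S) + l * (x ^ (lam - 1) * S - 1 / (lam - 1)) := by ring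
  have hbound1 : |x ^ (lam - 1) * (f x - l * S)| ≤ ε / 2 := by
    rw [abs_mul, abs_of_nonneg hxp.le]
    calc x ^ (lam - 1) * |f x - l * S| ≤ x ^ (lam - 1) * (ε₁ * S) :=
          mul_le_mul_of_nonneg_left hkey hxp.le
      _ = ε₁ * (x ^ (lam - 1) * S) := by ring
      _ ≤ ε₁ * B x := mul_le_mul_of_nonneg_left hSB hε₁.le
      _ ≤ ε₁ * (1 / (lam - 1) + 1) := mul_le_mul_of_nonneg_left hB1 hε₁.le
      _ = ε / 2 := by rw [hε₁def]; field_simp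
  have hbound2 : |l * (x ^ (lam - 1) * S - 1 / (lam - 1))| < ε / 2 := by
    rw [abs_mul]
    calc |l| * |x ^ (lam - 1) * S - 1 / (lam - 1)| ≤ (|l| + 1) * |B x - 1 / (lam - 1)| := by
          apply mul_le_mul (by linarith [abs_nonneg l]) _ (abs_nonneg _) (by positivity)
          rw [abs_of_nonneg (by linarith), abs_of_nonneg (by linarith)]
          linarith
      _ < ε / 2 := hB2
  calc |x ^ (lam - 1) * f x - l / (lam - 1)| ≤
        |x ^ (lam - 1) * (f x - l * S)| + |l * (x ^ (lam - 1) * S - 1 / (lam - 1))| := by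
        rw [hdecomp]; exact abs_add_le _ _
    _ < ε := by linarith
end

section
/- For all real a, b and as x → ∞, lim_{x→∞} x^(b-a) · Γ(x+a)/Γ(x+b) = 1. -/
open Filter Real

private def P (c : ℝ) : Prop :=
  Tendsto (fun x : ℝ => x ^ (-c) * (Real.Gamma (x + c) / Real.Gamma x)) atTop (nhds 1)

private lemma tendsto_one_add (s : ℝ) :
    Tendsto (fun x : ℝ => 1 + s / x) atTop (nhds 1) := by
  have h : Tendsto (fun x : ℝ => s / x) atTop (nhds 0) :=
    tendsto_const_nhds.div_atTop tendsto_id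
  simpa using h.const_add (1:ℝ)

private lemma gamma_upper {s : ℝ} (hs0 : 0 < s) (hs1 : s < 1) {x : ℝ} (hx : 1 ≤ x) :
    Real.Gamma (x + s) ≤ Real.Gamma x * x ^ s := by
  have hx0 : (0:ℝ) < x := lt_of_lt_of_le one_pos hx
  have hG : 0 < Real.Gamma x := Real.Gamma_pos_of_pos hx0
  have h := Real.Gamma_mul_add_mul_le_rpow_Gamma_mul_rpow_Gamma (s := x) (t := x + 1)
    (a := 1 - s) (b := s) hx0 (by linarith) (by linarith) hs0 (by ring)
  have he : (1 - s) * x + s * (x + 1) = x + s := by ring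
  rw [he] at h
  calc Real.Gamma (x + s) ≤ Real.Gamma x ^ (1 - s) * Real.Gamma (x + 1) ^ s := h
    _ = Real.Gamma x * x ^ s := by
        rw [Real.Gamma_add_one hx0.ne', Real.mul_rpow hx0.le hG.le,
          show Real.Gamma x ^ (1 - s) * (x ^ s * Real.Gamma x ^ s) =
            Real.Gamma x ^ (1 - s) * Real.Gamma x ^ s * x ^ s by ring,
          ← Real.rpow_add hG]
        norm_num

private lemma gamma_lower {s : ℝ} (hs0 : 0 < s) (hs1 : s < 1) {x : ℝ} (hx : 1 ≤ x) :
    x * Real.Gamma x ≤ Real.Gamma (x + s) * (x + s) ^ (1 - s) := by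
  have hx0 : (0:ℝ) < x := lt_of_lt_of_le one_pos hx
  have hxs : (0:ℝ) < x + s := by linarith
  have hGs : 0 < Real.Gamma (x + s) := Real.Gamma_pos_of_pos hxs
  have h := Real.Gamma_mul_add_mul_le_rpow_Gamma_mul_rpow_Gamma (s := x + s) (t := x + s + 1)
    (a := s) (b := 1 - s) hxs (by linarith) hs0 (by linarith) (by ring)
  have he : s * (x + s) + (1 - s) * (x + s + 1) = x + 1 := by ring
  rw [he] at h
  calc x * Real.Gamma x = Real.Gamma (x + 1) := (Real.Gamma_add_one hx0.ne').symm
    _ ≤ Real.Gamma (x + s) ^ s * Real.Gamma (x + s + 1) ^ (1 - s) := h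
    _ = Real.Gamma (x + s) * (x + s) ^ (1 - s) := by
        rw [Real.Gamma_add_one hxs.ne', Real.mul_rpow hxs.le hGs.le,
          show Real.Gamma (x + s) ^ s * ((x + s) ^ (1 - s) * Real.Gamma (x + s) ^ (1 - s)) =
            Real.Gamma (x + s) ^ s * Real.Gamma (x + s) ^ (1 - s) * (x + s) ^ (1 - s) by ring,
          ← Real.rpow_add hGs]
        norm_num

private lemma base {s : ℝ} (hs0 : 0 ≤ s) (hs1 : s ≤ 1) : P s := by
  unfold P
  rcases eq_or_lt_of_le hs0 with rfl | hs0
  · refine tendsto_const_nhds.congr' ?_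
    filter_upwards [eventually_gt_atTop (0:ℝ)] with x hx
    have hG : Real.Gamma x ≠ 0 := (Real.Gamma_pos_of_pos hx).ne'
    simp [div_self hG]
  rcases eq_or_lt_of_le hs1 with rfl | hs1
  · refine tendsto_const_nhds.congr' ?_
    filter_upwards [eventually_gt_atTop (0:ℝ)] with x hx
    have hG : Real.Gamma x ≠ 0 := (Real.Gamma_pos_of_pos hx).ne'
    rw [Real.Gamma_add_one hx.ne', Real.rpow_neg_one]
    field_simp
  have hlow : Tendsto (fun x : ℝ => (1 + s / x) ^ (s - 1)) atTop (nhds 1) := by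
    have h1 : Tendsto (fun x : ℝ => 1 + s / x) atTop (nhds 1) := tendsto_one_add _
    simpa using h1.rpow_const (Or.inl one_ne_zero)
  refine tendsto_of_tendsto_of_tendsto_of_le_of_le' hlow tendsto_const_nhds ?_ ?_
  · filter_upwards [eventually_ge_atTop (1:ℝ)] with x hx
    have hx0 : (0:ℝ) < x := lt_of_lt_of_le one_pos hx
    have hxs : (0:ℝ) < x + s := by linarith
    have hG : 0 < Real.Gamma x := Real.Gamma_pos_of_pos hx0
    have hp1 : 0 < (x + s) ^ (1 - s) := Real.rpow_pos_of_pos hxs _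
    have h1 : x * (x + s) ^ (s - 1) ≤ Real.Gamma (x + s) / Real.Gamma x := by
      have e : x * (x + s) ^ (s - 1) = x / (x + s) ^ (1 - s) := by
        rw [show s - 1 = -(1 - s) by ring, Real.rpow_neg hxs.le]
        rw [div_eq_mul_inv]
      rw [e, div_le_div_iff₀ hp1 hG]
      linarith [gamma_lower hs0 hs1 hx]
    have key : (1 + s / x) ^ (s - 1) = x ^ (-s) * (x * (x + s) ^ (s - 1)) := by
      rw [show (1 : ℝ) + s / x = (x + s) / x by field_simp,
        Real.div_rpow hxs.le hx0.le, Real.rpow_sub hxs, Real.rpow_sub hx0,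
        Real.rpow_one, Real.rpow_one, Real.rpow_neg hx0.le]
      field_simp
    rw [key]
    exact mul_le_mul_of_nonneg_left h1 (Real.rpow_pos_of_pos hx0 _).le
  · filter_upwards [eventually_ge_atTop (1:ℝ)] with x hx
    have hx0 : (0:ℝ) < x := lt_of_lt_of_le one_pos hx
    have hG : 0 < Real.Gamma x := Real.Gamma_pos_of_pos hx0
    have h := gamma_upper hs0 hs1 hx
    have hxneg : 0 < x ^ (-s) := Real.rpow_pos_of_pos hx0 _
    calc x ^ (-s) * (Real.Gamma (x + s) / Real.Gamma x)
        ≤ x ^ (-s) * x ^ s := by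
          apply mul_le_mul_of_nonneg_left ?_ hxneg.le
          rw [div_le_iff₀ hG]; linarith
      _ = 1 := by rw [← Real.rpow_add hx0]; simp

private lemma stepUp {c : ℝ} (h : P c) : P (c + 1) := by
  unfold P at *
  have hfac : Tendsto (fun x : ℝ => (x + c) / x) atTop (nhds 1) := by
    have h1 : Tendsto (fun x : ℝ => 1 + c / x) atTop (nhds 1) := tendsto_one_add _
    refine h1.congr' ?_
    filter_upwards [eventually_gt_atTop (0:ℝ)] with x hx
    field_simp
  have := hfac.mul h
  rw [one_mul] at this
  refine this.congr' ?_
  filter_upwards [eventually_gt_atTop (max 1 (-c))] with x hx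
  have hx0 : (0:ℝ) < x := lt_of_lt_of_le one_pos (le_of_lt (lt_of_le_of_lt (le_max_left _ _) hx))
  have hxc : (0:ℝ) < x + c := by have := lt_of_le_of_lt (le_max_right 1 (-c)) hx; linarith
  rw [show x + (c + 1) = (x + c) + 1 by ring, Real.Gamma_add_one hxc.ne']
  rw [show -(c+1) = -c + -1 by ring, Real.rpow_add hx0, Real.rpow_neg_one]
  field_simp

private lemma stepDown {c : ℝ} (h : P c) : P (c - 1) := by
  unfold P at *
  have hfac : Tendsto (fun x : ℝ => x / (x + (c - 1))) atTop (nhds 1) := by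
    have h1 : Tendsto (fun x : ℝ => 1 + (c-1) / x) atTop (nhds 1) := tendsto_one_add _
    have h2 := h1.inv₀ one_ne_zero
    rw [inv_one] at h2
    refine h2.congr' ?_
    filter_upwards [eventually_gt_atTop (max 1 (1-c))] with x hx
    have hx0 : (0:ℝ) < x := lt_of_lt_of_le one_pos (le_of_lt (lt_of_le_of_lt (le_max_left _ _) hx))
    have hxc : (0:ℝ) < x + (c - 1) := by
      have := lt_of_le_of_lt (le_max_right 1 (1-c)) hx; linarith
    rw [show (1 + (c-1)/x)⁻¹ = x / (x + (c-1)) by field_simp]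
  have := hfac.mul h
  rw [one_mul] at this
  refine this.congr' ?_
  filter_upwards [eventually_gt_atTop (max 1 (1-c))] with x hx
  have hx0 : (0:ℝ) < x := lt_of_lt_of_le one_pos (le_of_lt (lt_of_le_of_lt (le_max_left _ _) hx))
  have hxc : (0:ℝ) < x + (c - 1) := by
    have := lt_of_le_of_lt (le_max_right 1 (1-c)) hx; linarith
  have hG : Real.Gamma (x + c) = (x + (c-1)) * Real.Gamma (x + (c-1)) := by
    rw [show x + c = (x + (c-1)) + 1 by ring, Real.Gamma_add_one hxc.ne']
  rw [hG, show -(c-1) = -c + 1 by ring, Real.rpow_add hx0, Real.rpow_one]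
  field_simp

private lemma allP (c : ℝ) : P c := by
  have key : ∀ n : ℤ, P (Int.fract c + n) := by
    intro n
    induction n using Int.induction_on with
    | zero => simpa using base (Int.fract_nonneg c) (Int.fract_lt_one c).le
    | succ k ih =>
        push_cast at ih ⊢
        rw [show Int.fract c + ((k:ℝ) + 1) = (Int.fract c + k) + 1 by ring]
        exact stepUp ih
    | pred k ih =>
        push_cast at ih ⊢
        rw [show Int.fract c + (-(k:ℝ) - 1) = (Int.fract c + -k) - 1 by ring]
        exact stepDown ih
  have := key ⌊c⌋
  rwa [Int.fract_add_floor] at this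

theorem stmt_2 (a b : ℝ) :
    Tendsto (fun x : ℝ => x ^ (b - a) * (Real.Gamma (x + a) / Real.Gamma (x + b)))
      atTop (nhds 1) := by
  have ha := allP a
  have hb := allP b
  have h := ha.mul (hb.inv₀ one_ne_zero)
  rw [mul_inv_cancel₀ one_ne_zero] at h
  refine h.congr' ?_
  filter_upwards [eventually_gt_atTop (max 1 (max (-a) (-b)))] with x hx
  have hx0 : (0:ℝ) < x := lt_of_lt_of_le one_pos (le_of_lt (lt_of_le_of_lt (le_max_left _ _) hx))
  have hxa : (0:ℝ) < x + a := by
    have := lt_of_le_of_lt ((le_max_left (-a) (-b)).trans (le_max_right _ _)) hx; linarith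
  have hxb : (0:ℝ) < x + b := by
    have := lt_of_le_of_lt ((le_max_right (-a) (-b)).trans (le_max_right _ _)) hx; linarith
  have hGx : (0:ℝ) < Real.Gamma x := Real.Gamma_pos_of_pos hx0
  have hGb : (0:ℝ) < Real.Gamma (x + b) := Real.Gamma_pos_of_pos hxb
  have hxna : (0:ℝ) < x ^ (-a) := Real.rpow_pos_of_pos hx0 _
  have hxnb : (0:ℝ) < x ^ (-b) := Real.rpow_pos_of_pos hx0 _
  have e : x ^ (b - a) = x ^ (-a) / x ^ (-b) := by
    rw [← Real.rpow_sub hx0]; ring_nf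
  rw [e]
  field_simp
end

section
/- Define E₀(x) by 8π³(x/e)^{6x}·Γ(x+1)^{-6} = exp(E₀(x))/Φ₀(x), where Φ₀(x) = x³ + x²/2 + x/8 + 1/240. Then lim_{x→∞} x⁴·E₀(x) = 11/1920. -/
open Filter Real Set

noncomputable section StirlingAux

/-- summand of the Binet-type series -/
def gg (t : ℝ) : ℝ := (t + 1/2) * (Real.log (t+1) - Real.log t) - 1

def gg' (t : ℝ) : ℝ := (Real.log (t+1) - Real.log t) + (t + 1/2) * ((t+1)⁻¹ - t⁻¹)

def gg'' (t : ℝ) : ℝ := ((t+1)⁻¹ - t⁻¹) + (((t+1)⁻¹ - t⁻¹) + (t + 1/2) * (-1/(t+1)^2 - -1/t^2))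

lemma hasDerivAt_gg {t : ℝ} (ht : 0 < t) : HasDerivAt gg (gg' t) t := by
  have h1 : (t : ℝ) + 1 ≠ 0 := by positivity
  have hlog1 : HasDerivAt (fun s : ℝ => Real.log (s+1)) (1/(t+1)) t := by
    simpa using (((hasDerivAt_id t).add_const 1).log h1)
  have hlog : HasDerivAt Real.log t⁻¹ t := Real.hasDerivAt_log ht.ne'
  have := (((hasDerivAt_id t).add_const (1/2)).mul (hlog1.sub hlog)).sub_const 1
  exact this.congr_deriv (by
  unfold gg'
  simp only [id_eq, Pi.sub_apply, Pi.add_apply, Pi.mul_apply]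
  ring)

lemma hasDerivAt_gg' {t : ℝ} (ht : 0 < t) : HasDerivAt gg' (gg'' t) t := by
  have h1 : (t : ℝ) + 1 ≠ 0 := by positivity
  have hlog1 : HasDerivAt (fun s : ℝ => Real.log (s+1)) ((t+1)⁻¹) t := by
    simpa using (((hasDerivAt_id t).add_const 1).log h1)
  have hlog : HasDerivAt Real.log t⁻¹ t := Real.hasDerivAt_log ht.ne'
  have hinv1 : HasDerivAt (fun s : ℝ => (s+1)⁻¹) (-1/(t+1)^2) t := by
    exact ((hasDerivAt_id t).add_const 1).inv h1
  have hinv : HasDerivAt (fun s : ℝ => s⁻¹) (-1/t^2) t := by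
    exact (hasDerivAt_id t).inv ht.ne'
  have := (hlog1.sub hlog).add
    (((hasDerivAt_id t).add_const (1/2)).mul (hinv1.sub hinv))
  exact this.congr_deriv (by
  unfold gg''
  simp only [id_eq, Pi.sub_apply, Pi.add_apply, Pi.mul_apply]
  ring)

lemma gg''_nonneg {t : ℝ} (ht : 0 < t) : 0 ≤ gg'' t := by
  have h1 : (0:ℝ) < t + 1 := by linarith
  have : gg'' t = 1/(2*t^2*(t+1)^2) := by
    unfold gg''
    field_simp
    ring
  rw [this]
  positivity

lemma convexOn_gg : ConvexOn ℝ (Set.Ioi 0) gg := by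
  have hint : interior (Set.Ioi (0:ℝ)) = Set.Ioi 0 := interior_Ioi
  refine convexOn_of_deriv2_nonneg (convex_Ioi 0) ?_ ?_ ?_ ?_
  · intro t ht
    exact (hasDerivAt_gg ht).continuousAt.continuousWithinAt
  · rw [hint]; intro t ht
    exact (hasDerivAt_gg ht).differentiableAt.differentiableWithinAt
  · rw [hint]; intro t ht
    have heq : deriv gg =ᶠ[nhds t] gg' := by
      filter_upwards [isOpen_Ioi.mem_nhds ht] with y hy
      exact (hasDerivAt_gg hy).deriv
    exact ((hasDerivAt_gg' ht).differentiableAt.congr_of_eventuallyEq heq).differentiableWithinAt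
  · rw [hint]; intro t ht
    have heq : deriv gg =ᶠ[nhds t] gg' := by
      filter_upwards [isOpen_Ioi.mem_nhds ht] with y hy
      exact (hasDerivAt_gg hy).deriv
    have h2 : deriv^[2] gg t = deriv (deriv gg) t := by
      rw [Function.iterate_succ_apply', Function.iterate_one]
    rw [h2, heq.deriv_eq, (hasDerivAt_gg' ht).deriv]
    exact gg''_nonneg ht


def hh (t : ℝ) : ℝ := 1/(12*t) - 1/(360*t^3)

def Qfun (t : ℝ) : ℝ := 1/(12*t^2) - 1/(12*t^3) + 3/(40*t^4) - 1/(15*t^5) - 1/(12*t^6)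

lemma log_one_add_inv {t : ℝ} (ht : 0 < t) :
    Real.log (t+1) - Real.log t = Real.log (1 + 1/t) := by
  rw [← Real.log_div (by positivity) ht.ne']
  congr 1
  field_simp

lemma log_taylor6 {t : ℝ} (ht : 2 ≤ t) :
    |Real.log (1 + 1/t) - (1/t - 1/(2*t^2) + 1/(3*t^3) - 1/(4*t^4) + 1/(5*t^5) - 1/(6*t^6))|
      ≤ 2/t^7 := by
  have ht0 : (0:ℝ) < t := by linarith
  have habs : |(-(1/t) : ℝ)| < 1 := by
    rw [abs_neg, abs_of_pos (by positivity)]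
    rw [div_lt_one ht0]; linarith
  have h := Real.abs_log_sub_add_sum_range_le habs 6
  have hsum : (∑ i ∈ Finset.range 6, (-(1/t)) ^ (i + 1) / (i + 1)) =
      -(1/t - 1/(2*t^2) + 1/(3*t^3) - 1/(4*t^4) + 1/(5*t^5) - 1/(6*t^6)) := by
    simp [Finset.sum_range_succ]
    ring
  rw [hsum] at h
  have h2 : (1 : ℝ) - -(1/t) = 1 + 1/t := by ring
  rw [h2] at h
  have h3 : |(-(1/t):ℝ)| = 1/t := by rw [abs_neg, abs_of_pos (by positivity)]
  rw [h3] at h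
  have key : Real.log (1 + 1/t) - (1/t - 1/(2*t^2) + 1/(3*t^3) - 1/(4*t^4) + 1/(5*t^5) - 1/(6*t^6))
      = -(1/t - 1/(2*t^2) + 1/(3*t^3) - 1/(4*t^4) + 1/(5*t^5) - 1/(6*t^6)) + Real.log (1 + 1/t) := by
    ring
  rw [key]
  refine h.trans ?_
  have hhalf : (1:ℝ)/2 ≤ 1 - 1/t := by
    rw [le_sub_iff_add_le]
    have : 1/t ≤ 1/2 := by
      rw [div_le_div_iff₀ ht0 (by norm_num)]; linarith
    linarith
  calc (1/t)^(6+1) / (1 - 1/t) ≤ (1/t)^(6+1) / (1/2) := by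
        gcongr
    _ = 2/t^7 := by
        rw [one_div_pow]
        field_simp
  
lemma gg_sub_Q {t : ℝ} (ht : 2 ≤ t) : |gg t - Qfun t| ≤ 3/t^6 := by
  have ht0 : (0:ℝ) < t := by linarith
  have hQ : Qfun t = (t + 1/2) * (1/t - 1/(2*t^2) + 1/(3*t^3) - 1/(4*t^4) + 1/(5*t^5) - 1/(6*t^6)) - 1 := by
    unfold Qfun; field_simp; ring
  have hgq : gg t - Qfun t
      = (t + 1/2) * (Real.log (1 + 1/t) - (1/t - 1/(2*t^2) + 1/(3*t^3) - 1/(4*t^4) + 1/(5*t^5) - 1/(6*t^6))) := by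
    rw [hQ]; unfold gg; rw [log_one_add_inv ht0]; ring
  rw [hgq, abs_mul, abs_of_pos (by linarith : (0:ℝ) < t + 1/2)]
  have h1 := log_taylor6 ht
  have h2 : (t + 1/2) * |Real.log (1 + 1/t) - (1/t - 1/(2*t^2) + 1/(3*t^3) - 1/(4*t^4) + 1/(5*t^5) - 1/(6*t^6))|
      ≤ (t + 1/2) * (2/t^7) := mul_le_mul_of_nonneg_left h1 (by linarith)
  refine h2.trans ?_
  have hrw : (t + 1/2) * (2/t^7) = (2*t+1)/t^7 := by ring
  rw [hrw, div_le_div_iff₀ (by positivity) (by positivity)]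
  nlinarith [pow_pos ht0 6]

lemma Q_sub_dh {t : ℝ} (ht : 2 ≤ t) : |Qfun t - (hh t - hh (t+1))| ≤ 2/t^6 := by
  have ht0 : (0:ℝ) < t := by linarith
  have ht1 : (0:ℝ) < t + 1 := by linarith
  have hid : Qfun t - (hh t - hh (t+1)) = -((50*t^3+135*t^2+114*t+30)/(360*t^6*(t+1)^3)) := by
    unfold Qfun hh; field_simp; ring
  rw [hid, abs_neg, abs_of_pos (by positivity)]
  rw [div_le_div_iff₀ (by positivity) (by positivity)]
  have hcube : t^3 ≤ (t+1)^3 := by nlinarith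
  nlinarith [pow_pos ht0 6, pow_pos ht0 3, mul_pos (pow_pos ht0 6) (pow_pos ht0 3),
    mul_le_mul_of_nonneg_left hcube (by positivity : (0:ℝ) ≤ 360 * t^6)]

lemma gg_sub_dh {t : ℝ} (ht : 2 ≤ t) : |gg t - (hh t - hh (t+1))| ≤ 5/t^6 := by
  have h : gg t - (hh t - hh (t+1)) = (gg t - Qfun t) + (Qfun t - (hh t - hh (t+1))) := by ring
  rw [h]
  refine (abs_add_le _ _).trans ?_
  have := gg_sub_Q ht; have := Q_sub_dh ht
  have ht0 : (0:ℝ) < t := by linarith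
  have : (3:ℝ)/t^6 + 2/t^6 = 5/t^6 := by ring
  linarith [gg_sub_Q ht, Q_sub_dh ht]

lemma gg_abs {t : ℝ} (ht : 2 ≤ t) : |gg t| ≤ 1/t^2 := by
  have ht0 : (0:ℝ) < t := by linarith
  have h : gg t = (gg t - Qfun t) + Qfun t := by ring
  rw [h]
  refine (abs_add_le _ _).trans ?_
  have h1 := gg_sub_Q ht
  have h2 : |Qfun t| ≤ 1/(2*t^2) := by
    have key : Qfun t = (10*t^4 - 10*t^3 + 9*t^2 - 8*t - 10)/(120*t^6) := by
      unfold Qfun; field_simp; ring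
    rw [key, abs_div, abs_of_pos (by positivity : (0:ℝ) < 120*t^6)]
    rw [div_le_div_iff₀ (by positivity) (by positivity)]
    have habs : |10*t^4 - 10*t^3 + 9*t^2 - 8*t - 10| ≤ 10*t^4 + 10*t^3 + 9*t^2 + 8*t + 10 := by
      refine (abs_le.2 ⟨?_, ?_⟩) <;> nlinarith [pow_pos ht0 2, pow_pos ht0 3, pow_pos ht0 4]
    have a1 : t^4 ≥ 2*t^3 := by nlinarith [pow_pos ht0 3]
    have a2 : t^3 ≥ 2*t^2 := by nlinarith [pow_pos ht0 2]
    have a3 : t^2 ≥ 2*t := by nlinarith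
    have hpoly : 10*t^4 + 10*t^3 + 9*t^2 + 8*t + 10 ≤ 30*t^4 := by linarith
    calc |10*t^4 - 10*t^3 + 9*t^2 - 8*t - 10| * (2*t^2)
        ≤ (30*t^4) * (2*t^2) := by
          exact mul_le_mul_of_nonneg_right (habs.trans hpoly) (by positivity)
      _ ≤ 1*(120*t^6) := by nlinarith [pow_pos ht0 6]
  have h36 : (3:ℝ)/t^6 ≤ 1/(2*t^2) := by
    rw [div_le_div_iff₀ (by positivity) (by positivity)]
    have ht2 : (4:ℝ) ≤ t^2 := by nlinarith
    have h6 : t^6 = t^2*t^2*t^2 := by ring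
    nlinarith [ht2, pow_pos ht0 2]
  have hfin : (1:ℝ)/(2*t^2) + 1/(2*t^2) = 1/t^2 := by ring
  linarith


lemma summable_gg {x : ℝ} (hx : 0 < x) : Summable (fun n : ℕ => gg (x + n)) := by
  rw [← summable_nat_add_iff 2]
  have hcomp : Summable (fun n : ℕ => 1/((n:ℝ)+1)^2) := by
    have := (summable_nat_add_iff (f := fun n : ℕ => 1/(n:ℝ)^2) 1).2
      ((Real.summable_one_div_nat_pow (p := 2)).2 one_lt_two)
    refine this.congr fun n => ?_
    push_cast
    ring_nf
  refine Summable.of_norm (hcomp.of_nonneg_of_le (fun n => norm_nonneg _) fun n => ?_)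
  have h2 : (2:ℝ) ≤ x + ↑(n+2) := by
    push_cast
    have : (0:ℝ) ≤ n := Nat.cast_nonneg n
    linarith
  have hb := gg_abs h2
  refine hb.trans ?_
  have hp : (0:ℝ) < (n:ℝ)+1 := by positivity
  rw [div_le_div_iff₀ (by positivity) (by positivity)]
  have : ((n:ℝ)+1) ≤ x + ↑(n+2) := by push_cast; linarith
  nlinarith [this, hp]

def mu (x : ℝ) : ℝ := ∑' n : ℕ, gg (x + n)

lemma mu_succ {x : ℝ} (hx : 0 < x) : mu x = gg x + mu (x+1) := by
  unfold mu
  rw [Summable.tsum_eq_zero_add (summable_gg hx)]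
  congr 1
  · norm_num
  · exact tsum_congr fun n => by push_cast; ring_nf

lemma combo_pos {x y a b : ℝ} (hx : 0 < x) (hy : 0 < y) (ha : 0 ≤ a) (hb : 0 ≤ b)
    (hab : a + b = 1) : 0 < a * x + b * y := by
  rcases eq_or_lt_of_le ha with h|h
  · have hb1 : b = 1 := by linarith
    rw [← h, hb1]; simpa using hy
  · have h1 : 0 ≤ b * y := mul_nonneg hb hy.le
    nlinarith

lemma convexOn_mu : ConvexOn ℝ (Set.Ioi 0) mu := by
  refine ⟨convex_Ioi 0, fun x hx y hy a b ha hb hab => ?_⟩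
  simp only [smul_eq_mul]
  have hx' : (0:ℝ) < x := hx
  have hy' : (0:ℝ) < y := hy
  have hxy : 0 < a*x + b*y := combo_pos hx' hy' ha hb hab
  have hsx := summable_gg hx'
  have hsy := summable_gg hy'
  have hsum2 : Summable (fun n : ℕ => a * gg (x+n) + b * gg (y+n)) :=
    (hsx.mul_left a).add (hsy.mul_left b)
  unfold mu
  calc (∑' n : ℕ, gg (a*x + b*y + n))
      ≤ ∑' n : ℕ, (a * gg (x+n) + b * gg (y+n)) := by
        refine Summable.tsum_le_tsum (fun n => ?_) (summable_gg hxy) hsum2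
        have hmem1 : (x + (n:ℝ)) ∈ Set.Ioi (0:ℝ) := by
          simp only [Set.mem_Ioi]; positivity
        have hmem2 : (y + (n:ℝ)) ∈ Set.Ioi (0:ℝ) := by
          simp only [Set.mem_Ioi]; positivity
        have := convexOn_gg.2 hmem1 hmem2 ha hb hab
        simp only [smul_eq_mul] at this
        have harg : a * (x + n) + b * (y + n) = a*x + b*y + n := by
          have : (a + b) * n = n := by rw [hab]; ring
          nlinarith [this]
        rwa [harg] at this
    _ = a * mu x + b * mu y := by
        rw [Summable.tsum_add (hsx.mul_left a) (hsy.mul_left b), tsum_mul_left, tsum_mul_left]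
        rfl

lemma tendsto_hh_zero {x : ℝ} :
    Tendsto (fun N : ℕ => hh (x + N)) atTop (nhds 0) := by
  have hshift : Tendsto (fun N : ℕ => x + (N:ℝ)) atTop atTop :=
    tendsto_atTop_add_const_left _ x tendsto_natCast_atTop_atTop
  have h1 : Tendsto (fun t : ℝ => hh t) atTop (nhds 0) := by
    have ha : Tendsto (fun t : ℝ => 1/(12*t)) atTop (nhds 0) := by
      apply Tendsto.div_atTop tendsto_const_nhds
      exact (tendsto_id.const_mul_atTop (by norm_num))
    have hb : Tendsto (fun t : ℝ => 1/(360*t^3)) atTop (nhds 0) := by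
      apply Tendsto.div_atTop tendsto_const_nhds
      exact ((tendsto_pow_atTop (three_ne_zero)).const_mul_atTop (by norm_num))
    have h0 := ha.sub hb
    rw [sub_zero] at h0
    exact h0
  exact h1.comp hshift

lemma dh_nonneg {t : ℝ} (ht : 2 ≤ t) : 0 ≤ hh t - hh (t+1) := by
  have ht0 : (0:ℝ) < t := by linarith
  have key : hh t - hh (t+1) = (30*t^4+60*t^3+27*t^2-3*t-1)/(360*t^3*(t+1)^3) := by
    unfold hh; field_simp; ring
  rw [key]
  have : (0:ℝ) ≤ 30*t^4+60*t^3+27*t^2-3*t-1 := by nlinarith [pow_pos ht0 2, pow_pos ht0 3, pow_pos ht0 4]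
  positivity

lemma hasSum_dh {x : ℝ} (hx : 2 ≤ x) :
    HasSum (fun n : ℕ => hh (x+n) - hh (x+n+1)) (hh x) := by
  have hnn : ∀ n : ℕ, 0 ≤ hh (x+n) - hh (x+n+1) := fun n =>
    dh_nonneg (by have : (0:ℝ) ≤ n := Nat.cast_nonneg n; linarith)
  rw [hasSum_iff_tendsto_nat_of_nonneg hnn]
  have hps : ∀ N : ℕ, ∑ n ∈ Finset.range N, (hh (x+n) - hh (x+n+1)) = hh x - hh (x+N) := by
    intro N
    calc ∑ n ∈ Finset.range N, (hh (x+n) - hh (x+n+1))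
        = ∑ n ∈ Finset.range N, (hh (x+n) - hh (x+(n+1:ℕ))) :=
          Finset.sum_congr rfl fun n _ => by push_cast; ring_nf
      _ = hh (x+(0:ℕ)) - hh (x+N) := Finset.sum_range_sub' (fun n : ℕ => hh (x + n)) N
      _ = hh x - hh (x+N) := by norm_num
  simp only [hps]
  simpa using tendsto_const_nhds.sub (tendsto_hh_zero (x := x))

lemma tendsto_p5_zero {x : ℝ} :
    Tendsto (fun N : ℕ => 1/(x + N)^5) atTop (nhds 0) := by
  have hshift : Tendsto (fun N : ℕ => x + (N:ℝ)) atTop atTop :=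
    tendsto_atTop_add_const_left _ x tendsto_natCast_atTop_atTop
  have h1 : Tendsto (fun t : ℝ => 1/t^5) atTop (nhds 0) :=
    Tendsto.div_atTop tendsto_const_nhds (tendsto_pow_atTop (by norm_num))
  exact h1.comp hshift

lemma hasSum_p5 {x : ℝ} (hx : 2 ≤ x) :
    HasSum (fun n : ℕ => 1/(x-1+n)^5 - 1/(x+n)^5) (1/(x-1)^5) := by
  have hnn : ∀ n : ℕ, 0 ≤ 1/(x-1+n)^5 - 1/(x+n)^5 := by
    intro n
    have h0 : (0:ℝ) < x-1+n := by have : (0:ℝ) ≤ n := Nat.cast_nonneg n; linarith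
    have h1 : (x-1+(n:ℝ)) ≤ x+n := by linarith
    have := pow_le_pow_left₀ h0.le h1 5
    rw [sub_nonneg]
    exact one_div_le_one_div_of_le (pow_pos h0 5) this
  rw [hasSum_iff_tendsto_nat_of_nonneg hnn]
  have hps : ∀ N : ℕ, ∑ n ∈ Finset.range N, (1/(x-1+n)^5 - 1/(x+n)^5)
      = 1/(x-1)^5 - 1/(x-1+N)^5 := by
    intro N
    calc ∑ n ∈ Finset.range N, (1/(x-1+n)^5 - 1/(x+n)^5)
        = ∑ n ∈ Finset.range N, (1/(x-1+n)^5 - 1/(x-1+(n+1:ℕ))^5) :=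
          Finset.sum_congr rfl fun n _ => by push_cast; ring_nf
      _ = 1/(x-1+(0:ℕ))^5 - 1/(x-1+N)^5 := Finset.sum_range_sub' (fun n : ℕ => 1/(x-1+n)^5) N
      _ = 1/(x-1)^5 - 1/(x-1+N)^5 := by norm_num
  simp only [hps]
  simpa using tendsto_const_nhds.sub (tendsto_p5_zero (x := x - 1))

lemma five_div_le {t : ℝ} (ht : 2 ≤ t) : 5/t^6 ≤ 1/(t-1)^5 - 1/t^5 := by
  have ht0 : (0:ℝ) < t := by linarith
  have ht1 : (0:ℝ) < t - 1 := by linarith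
  have e : 1/(t-1)^5 - 1/t^5 = (t^5 - (t-1)^5)/((t-1)^5 * t^5) := by
    field_simp
  rw [e, div_le_div_iff₀ (by positivity) (by positivity)]
  have h1 : (5:ℝ)*(t-1)^4 ≤ t^5 - (t-1)^5 := by nlinarith [pow_pos ht1 2, pow_pos ht1 3]
  have h2 : (5:ℝ)*((t-1)^5*t^5) ≤ (5*(t-1)^4)*t^6 := by
    have hstep : (t-1)^5*t^5 ≤ (t-1)^4*t^6 := by
      have : (t-1)^5*t^5 = ((t-1)^4*t^5)*(t-1) := by ring
      have h' : ((t-1)^4*t^5)*(t-1) ≤ ((t-1)^4*t^5)*t :=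
        mul_le_mul_of_nonneg_left (by linarith) (by positivity)
      calc (t-1)^5*t^5 = ((t-1)^4*t^5)*(t-1) := by ring
        _ ≤ ((t-1)^4*t^5)*t := h'
        _ = (t-1)^4*t^6 := by ring
    linarith [mul_le_mul_of_nonneg_left hstep (by norm_num : (0:ℝ) ≤ 5)]
  calc (5:ℝ)*((t-1)^5*t^5) ≤ (5*(t-1)^4)*t^6 := h2
    _ ≤ (t^5-(t-1)^5)*t^6 := mul_le_mul_of_nonneg_right h1 (by positivity)

lemma mu_sub_hh {x : ℝ} (hx : 2 ≤ x) : |mu x - hh x| ≤ 1/(x-1)^5 := by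
  have hx0 : (0:ℝ) < x := by linarith
  have hg : HasSum (fun n : ℕ => gg (x+n)) (mu x) := (summable_gg hx0).hasSum
  have hd := hasSum_dh hx
  have hsub : HasSum (fun n : ℕ => gg (x+n) - (hh (x+n) - hh (x+n+1))) (mu x - hh x) :=
    hg.sub hd
  have harg : ∀ n : ℕ, (2:ℝ) ≤ x + n := fun n => by
    have : (0:ℝ) ≤ n := Nat.cast_nonneg n; linarith
  have hbound : ∀ n : ℕ, |gg (x+n) - (hh (x+n) - hh (x+n+1))| ≤ 1/(x-1+n)^5 - 1/(x+n)^5 := by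
    intro n
    refine (gg_sub_dh (harg n)).trans ?_
    have := five_div_le (harg n)
    have he : x + (n:ℝ) - 1 = x - 1 + n := by ring
    rwa [he] at this
  have hsumabs : Summable (fun n : ℕ => |gg (x+n) - (hh (x+n) - hh (x+n+1))|) :=
    (hasSum_p5 hx).summable.of_nonneg_of_le (fun n => abs_nonneg _) hbound
  calc |mu x - hh x| = |∑' n : ℕ, (gg (x+n) - (hh (x+n) - hh (x+n+1)))| := by
        rw [hsub.tsum_eq]
    _ ≤ ∑' n : ℕ, |gg (x+n) - (hh (x+n) - hh (x+n+1))| := by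
        have hn : Summable (fun n : ℕ => ‖gg (x+n) - (hh (x+n) - hh (x+n+1))‖) := by
          simpa [Real.norm_eq_abs] using hsumabs
        have := norm_tsum_le_tsum_norm hn
        simpa [Real.norm_eq_abs] using this
    _ ≤ ∑' n : ℕ, (1/(x-1+n)^5 - 1/(x+n)^5) :=
        Summable.tsum_le_tsum hbound hsumabs (hasSum_p5 hx).summable
    _ = 1/(x-1)^5 := (hasSum_p5 hx).tsum_eq


def dseq (m : ℕ) : ℝ := Real.log (Nat.factorial m) - ((m:ℝ)+1/2)*Real.log m + m

lemma dseq_stirling {m : ℕ} (hm : 1 ≤ m) :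
    Real.log (Stirling.stirlingSeq m) = dseq m - (1/2) * Real.log 2 := by
  have hm0 : (0:ℝ) < m := by exact_mod_cast hm
  rw [Stirling.log_stirlingSeq_formula]
  unfold dseq
  rw [Real.log_mul (by norm_num) hm0.ne', Real.log_div hm0.ne' (Real.exp_ne_zero 1),
    Real.log_exp]
  ring

lemma tendsto_dseq : Tendsto dseq atTop (nhds (Real.log (Real.sqrt (2*π)))) := by
  have h1 : Tendsto (fun m : ℕ => Real.log (Stirling.stirlingSeq m)) atTop
      (nhds (Real.log (Real.sqrt π))) :=
    ((Real.continuousAt_log (by positivity)).tendsto).comp Stirling.tendsto_stirlingSeq_sqrt_pi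
  have h2 : Tendsto (fun m : ℕ => Real.log (Stirling.stirlingSeq m) + (1/2) * Real.log 2)
      atTop (nhds (Real.log (Real.sqrt π) + (1/2) * Real.log 2)) :=
    h1.add_const _
  have hval : Real.log (Real.sqrt π) + (1/2) * Real.log 2 = Real.log (Real.sqrt (2*π)) := by
    rw [Real.log_sqrt pi_pos.le, Real.log_sqrt (by positivity), Real.log_mul (by norm_num) pi_pos.ne']
    ring
  rw [hval] at h2
  refine h2.congr' ?_
  filter_upwards [eventually_ge_atTop 1] with m hm
  rw [dseq_stirling hm]
  ring

lemma gg_nat {m : ℕ} (hm : 1 ≤ m) : gg m = dseq m - dseq (m+1) := by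
  have hm0 : (0:ℝ) < m := by exact_mod_cast hm
  have hfact : Real.log (Nat.factorial (m+1)) = Real.log ((m:ℝ)+1) + Real.log (Nat.factorial m) := by
    rw [Nat.factorial_succ]
    push_cast
    rw [Real.log_mul (by positivity) (by exact_mod_cast (Nat.factorial_pos m).ne')]
  unfold gg dseq
  push_cast
  rw [hfact]
  ring

lemma mu_one : mu 1 = 1 - Real.log (Real.sqrt (2*π)) := by
  have hps : ∀ N : ℕ, ∑ n ∈ Finset.range N, gg (1 + n) = dseq 1 - dseq (N+1) := by
    intro N
    calc ∑ n ∈ Finset.range N, gg (1 + n)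
        = ∑ n ∈ Finset.range N, (dseq (n+1) - dseq (n+1+1)) := by
          refine Finset.sum_congr rfl fun n _ => ?_
          have h1 : (1:ℝ) + n = ((n+1 : ℕ) : ℝ) := by push_cast; ring
          rw [h1, gg_nat (Nat.le_add_left 1 n)]
      _ = dseq (0+1) - dseq (N+1) := Finset.sum_range_sub' (fun n : ℕ => dseq (n+1)) N
      _ = dseq 1 - dseq (N+1) := by norm_num
  have hd1 : dseq 1 = 1 := by
    unfold dseq
    simp [Nat.factorial_one]
  have htend : Tendsto (fun N : ℕ => ∑ n ∈ Finset.range N, gg (1 + n)) atTop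
      (nhds (1 - Real.log (Real.sqrt (2*π)))) := by
    simp only [hps, hd1]
    exact tendsto_const_nhds.sub (tendsto_dseq.comp (tendsto_add_atTop_nat 1))
  have hsum : Tendsto (fun N : ℕ => ∑ n ∈ Finset.range N, gg (1 + n)) atTop (nhds (mu 1)) :=
    (summable_gg one_pos).hasSum.tendsto_sum_nat
  exact tendsto_nhds_unique hsum htend

-- convexity of (x-1/2) * log x - x
def phiF (t : ℝ) : ℝ := (t - 1/2) * Real.log t - t

def phiF' (t : ℝ) : ℝ := Real.log t + (t - 1/2) * t⁻¹ - 1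

def phiF'' (t : ℝ) : ℝ := t⁻¹ + (t⁻¹ + (t - 1/2) * (-1/t^2))

lemma hasDerivAt_phiF {t : ℝ} (ht : 0 < t) : HasDerivAt phiF (phiF' t) t := by
  have hlog : HasDerivAt Real.log t⁻¹ t := Real.hasDerivAt_log ht.ne'
  have := (((hasDerivAt_id t).sub_const (1/2)).mul hlog).sub (hasDerivAt_id t)
  exact this.congr_deriv (by
  unfold phiF'
  simp only [id_eq, Pi.sub_apply, Pi.add_apply, Pi.mul_apply]
  ring)

lemma hasDerivAt_phiF' {t : ℝ} (ht : 0 < t) : HasDerivAt phiF' (phiF'' t) t := by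
  have hlog : HasDerivAt Real.log t⁻¹ t := Real.hasDerivAt_log ht.ne'
  have hinv : HasDerivAt (fun s : ℝ => s⁻¹) (-1/t^2) t := by
    exact (hasDerivAt_id t).inv ht.ne'
  have := (hlog.add (((hasDerivAt_id t).sub_const (1/2)).mul hinv)).sub_const 1
  exact this.congr_deriv (by
  unfold phiF''
  simp only [id_eq, Pi.sub_apply, Pi.add_apply, Pi.mul_apply]
  ring)

lemma phiF''_nonneg {t : ℝ} (ht : 0 < t) : 0 ≤ phiF'' t := by
  have : phiF'' t = (2*t + 1)/(2*t^2) := by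
    unfold phiF''
    field_simp
    ring
  rw [this]
  positivity

lemma convexOn_phiF : ConvexOn ℝ (Set.Ioi 0) phiF := by
  have hint : interior (Set.Ioi (0:ℝ)) = Set.Ioi 0 := interior_Ioi
  refine convexOn_of_deriv2_nonneg (convex_Ioi 0) ?_ ?_ ?_ ?_
  · intro t ht
    exact (hasDerivAt_phiF ht).continuousAt.continuousWithinAt
  · rw [hint]; intro t ht
    exact (hasDerivAt_phiF ht).differentiableAt.differentiableWithinAt
  · rw [hint]; intro t ht
    have heq : deriv phiF =ᶠ[nhds t] phiF' := by
      filter_upwards [isOpen_Ioi.mem_nhds ht] with y hy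
      exact (hasDerivAt_phiF hy).deriv
    exact ((hasDerivAt_phiF' ht).differentiableAt.congr_of_eventuallyEq heq).differentiableWithinAt
  · rw [hint]; intro t ht
    have heq : deriv phiF =ᶠ[nhds t] phiF' := by
      filter_upwards [isOpen_Ioi.mem_nhds ht] with y hy
      exact (hasDerivAt_phiF hy).deriv
    have h2 : deriv^[2] phiF t = deriv (deriv phiF) t := by
      rw [Function.iterate_succ_apply', Function.iterate_one]
    rw [h2, heq.deriv_eq, (hasDerivAt_phiF' ht).deriv]
    exact phiF''_nonneg ht

def logH (x : ℝ) : ℝ := Real.log (Real.sqrt (2*π)) + phiF x + mu x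

def HH (x : ℝ) : ℝ := Real.exp (logH x)

lemma convexOn_logHH : ConvexOn ℝ (Set.Ioi 0) (Real.log ∘ HH) := by
  have h : Real.log ∘ HH = logH := funext fun x => Real.log_exp _
  rw [h]
  have := ((convexOn_const (Real.log (Real.sqrt (2*π))) (convex_Ioi (0:ℝ))).add
    convexOn_phiF).add convexOn_mu
  exact this

lemma HH_feq {y : ℝ} (hy : 0 < y) : HH (y + 1) = y * HH y := by
  have hmu : mu (y+1) = mu y - gg y := by linarith [mu_succ hy]
  have hlog : logH (y+1) = Real.log y + logH y := by
    unfold logH phiF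
    rw [hmu]
    unfold gg
    ring
  unfold HH
  rw [hlog, Real.exp_add, Real.exp_log hy]

lemma HH_one : HH 1 = 1 := by
  unfold HH logH phiF
  rw [mu_one]
  have : Real.log (√(2*π)) + ((1 - 1/2) * Real.log 1 - 1) + (1 - Real.log (√(2*π))) = 0 := by
    rw [Real.log_one]; ring
  rw [this, Real.exp_zero]

lemma log_Gamma_eq {x : ℝ} (hx : 0 < x) : Real.log (Real.Gamma x) = logH x := by
  have heq := Real.eq_Gamma_of_log_convex convexOn_logHH
    (fun {y} hy => HH_feq hy) (fun {y} _ => Real.exp_pos _) HH_one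
  have := (heq (Set.mem_Ioi.2 hx)).symm
  rw [this]
  exact Real.log_exp _


def uQ (x : ℝ) : ℝ := 1/(2*x) + 1/(8*x^2) + 1/(240*x^3)

lemma uQ_pos {x : ℝ} (hx : 0 < x) : 0 < uQ x := by unfold uQ; positivity

lemma uQ_le {x : ℝ} (hx : 2 ≤ x) : uQ x ≤ 1/x := by
  have hx0 : (0:ℝ) < x := by linarith
  have key : 1/x - uQ x = (120*x^2 - 30*x - 1)/(240*x^3) := by
    unfold uQ; field_simp; ring
  have hnum : (0:ℝ) ≤ 120*x^2 - 30*x - 1 := by nlinarith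
  have : (0:ℝ) ≤ 1/x - uQ x := by rw [key]; positivity
  linarith

lemma E0_eq (E₀ : ℝ → ℝ)
    (hE : ∀ x : ℝ, E₀ x =
      Real.log (8 * Real.pi ^ 3 * (x / Real.exp 1) ^ (6 * x) / Real.Gamma (x + 1) ^ 6) +
        Real.log (x ^ 3 + x ^ 2 / 2 + x / 8 + 1 / 240))
    {x : ℝ} (hx : 2 ≤ x) : E₀ x = -6 * mu x + Real.log (1 + uQ x) := by
  have hx0 : (0:ℝ) < x := by linarith
  have hu : (0:ℝ) < 1 + uQ x := by have := uQ_pos hx0; linarith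
  have hgam : (0:ℝ) < Real.Gamma (x+1) := Real.Gamma_pos_of_pos (by linarith)
  have hrp : (0:ℝ) < (x / Real.exp 1) ^ (6*x) := Real.rpow_pos_of_pos (by positivity) _
  rw [hE x]
  have hphi : x^3 + x^2/2 + x/8 + 1/240 = x^3 * (1 + uQ x) := by
    unfold uQ; field_simp; ring
  rw [hphi, Real.log_mul (by positivity) hu.ne', Real.log_pow]
  have h8 : (8:ℝ) * π^3 = (2*π)^3 := by ring
  rw [Real.log_div (by positivity) (by positivity),
    Real.log_mul (by positivity) hrp.ne', h8, Real.log_pow,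
    Real.log_rpow (by positivity), Real.log_div hx0.ne' (Real.exp_ne_zero 1), Real.log_exp,
    Real.log_pow]
  have hΓ : Real.log (Real.Gamma (x+1)) = Real.log x + logH x := by
    rw [Real.Gamma_add_one hx0.ne', Real.log_mul hx0.ne' (Real.Gamma_pos_of_pos hx0).ne',
      log_Gamma_eq hx0]
  rw [hΓ]
  unfold logH phiF
  rw [Real.log_sqrt (by positivity : (0:ℝ) ≤ 2*π)]
  push_cast
  ring

lemma log_P4_err {x : ℝ} (hx : 2 ≤ x) :
    |Real.log (1 + uQ x) - (uQ x - (uQ x)^2/2 + (uQ x)^3/3 - (uQ x)^4/4)| ≤ 2/x^5 := by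
  have hx0 : (0:ℝ) < x := by linarith
  set u := uQ x with hu_def
  have hu0 : 0 < u := uQ_pos hx0
  have hux : u ≤ 1/x := uQ_le hx
  have hu1 : u ≤ 1/2 := by
    refine hux.trans ?_
    rw [div_le_div_iff₀ hx0 (by norm_num)]; linarith
  have habs : |(-u : ℝ)| < 1 := by
    rw [abs_neg, abs_of_pos hu0]; linarith
  have h := Real.abs_log_sub_add_sum_range_le habs 4
  have hsum : (∑ i ∈ Finset.range 4, (-u) ^ (i + 1) / (i + 1)) =
      -(u - u^2/2 + u^3/3 - u^4/4) := by
    simp [Finset.sum_range_succ]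
    ring
  rw [hsum] at h
  have h2 : (1 : ℝ) - -u = 1 + u := by ring
  rw [h2] at h
  have h3 : |(-u:ℝ)| = u := by rw [abs_neg, abs_of_pos hu0]
  rw [h3] at h
  have key : Real.log (1 + u) - (u - u^2/2 + u^3/3 - u^4/4)
      = -(u - u^2/2 + u^3/3 - u^4/4) + Real.log (1 + u) := by ring
  rw [key]
  refine h.trans ?_
  have hhalf : (1:ℝ)/2 ≤ 1 - u := by linarith
  calc u^(4+1) / (1 - u) ≤ u^(4+1) / (1/2) := by gcongr
    _ = 2 * u^5 := by norm_num; ring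
    _ ≤ 2 * (1/x)^5 := by
        have := pow_le_pow_left₀ hu0.le hux 5
        linarith
    _ = 2/x^5 := by rw [one_div_pow]; field_simp

def Rp (y : ℝ) : ℝ := 11/1920 - 7/960*y - 601/115200*y^2 - 149/115200*y^3
  - 601/3686400*y^4 - 943/82944000*y^5 - 49/110592000*y^6 - 1/110592000*y^7
  - 1/13271040000*y^8

lemma Rp_id {x : ℝ} (hx0 : x ≠ 0) :
    x^4 * ((uQ x - (uQ x)^2/2 + (uQ x)^3/3 - (uQ x)^4/4) - 6 * hh x) = Rp (1/x) := by
  unfold uQ hh Rp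
  field_simp
  ring

end StirlingAux

theorem stmt_9 (E₀ : ℝ → ℝ)
    (hE : ∀ x : ℝ, E₀ x =
      Real.log (8 * Real.pi ^ 3 * (x / Real.exp 1) ^ (6 * x) / Real.Gamma (x + 1) ^ 6) +
        Real.log (x ^ 3 + x ^ 2 / 2 + x / 8 + 1 / 240)) :
    Tendsto (fun x : ℝ => x ^ 4 * E₀ x) atTop (nhds (11 / 1920)) := by
  have hkey : ∀ x : ℝ, 2 ≤ x → x^4 * E₀ x =
      x^4 * (Real.log (1 + uQ x) - (uQ x - (uQ x)^2/2 + (uQ x)^3/3 - (uQ x)^4/4))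
      + Rp (1/x) + 6*x^4*(hh x - mu x) := by
    intro x hx
    have hx0 : x ≠ 0 := by intro h; rw [h] at hx; norm_num at hx
    rw [E0_eq E₀ hE hx, ← Rp_id hx0]
    ring
  have hA : Tendsto (fun x : ℝ =>
      x^4 * (Real.log (1 + uQ x) - (uQ x - (uQ x)^2/2 + (uQ x)^3/3 - (uQ x)^4/4)))
      atTop (nhds 0) := by
    refine squeeze_zero_norm' (a := fun x : ℝ => 2/x) ?_ ?_
    · filter_upwards [eventually_ge_atTop (2:ℝ)] with x hx
      have hx0 : (0:ℝ) < x := by linarith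
      rw [Real.norm_eq_abs, abs_mul, abs_of_pos (by positivity : (0:ℝ) < x^4)]
      calc x^4 * |Real.log (1 + uQ x) - (uQ x - (uQ x)^2/2 + (uQ x)^3/3 - (uQ x)^4/4)|
          ≤ x^4 * (2/x^5) := mul_le_mul_of_nonneg_left (log_P4_err hx) (by positivity)
        _ = 2/x := by field_simp
    · exact Tendsto.div_atTop tendsto_const_nhds tendsto_id
  have hR : Tendsto (fun x : ℝ => Rp (1/x)) atTop (nhds (11/1920)) := by
    have hc : Continuous Rp := by unfold Rp; continuity
    have h0 : Rp 0 = 11/1920 := by unfold Rp; norm_num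
    have := (hc.tendsto 0).comp tendsto_inv_atTop_zero
    rw [h0] at this
    refine this.congr fun x => ?_
    simp [one_div]
  have hB : Tendsto (fun x : ℝ => 6*x^4*(hh x - mu x)) atTop (nhds 0) := by
    refine squeeze_zero_norm' (a := fun x : ℝ => 96/(x-1)) ?_ ?_
    · filter_upwards [eventually_ge_atTop (2:ℝ)] with x hx
      have hx0 : (0:ℝ) < x := by linarith
      have hx1 : (0:ℝ) < x - 1 := by linarith
      rw [Real.norm_eq_abs, abs_mul, abs_of_pos (by positivity : (0:ℝ) < 6*x^4)]
      have hmh : |hh x - mu x| ≤ 1/(x-1)^5 := by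
        rw [abs_sub_comm]; exact mu_sub_hh hx
      calc 6*x^4 * |hh x - mu x| ≤ 6*x^4 * (1/(x-1)^5) :=
            mul_le_mul_of_nonneg_left hmh (by positivity)
        _ ≤ 96/(x-1) := by
            have h1 : x ≤ 2*(x-1) := by linarith
            have h4 : x^4 ≤ 16*(x-1)^4 := by
              have := pow_le_pow_left₀ (by linarith : (0:ℝ) ≤ x) h1 4
              calc x^4 ≤ (2*(x-1))^4 := this
                _ = 16*(x-1)^4 := by ring
            have e : 6*x^4*(1/(x-1)^5) = (6*x^4)/(x-1)^5 := by ring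
            rw [e, div_le_div_iff₀ (by positivity) hx1]
            nlinarith [mul_le_mul_of_nonneg_right h4 hx1.le]
    · have : Tendsto (fun x : ℝ => x - 1) atTop atTop :=
        tendsto_atTop_add_const_right atTop (-1) tendsto_id
      exact Tendsto.div_atTop tendsto_const_nhds this
  have htot := (hA.add hR).add hB
  rw [zero_add, add_zero] at htot
  refine htot.congr' ?_
  filter_upwards [eventually_ge_atTop (2:ℝ)] with x hx
  exact (hkey x hx).symm
end

section
/- For every integer n ≥ 24, (1/√π)·(2πe/n)^{n/2}·(n³ + n² + n/2 + 1/30)^{-1/6} < Ω_n < (1/√π)·(2πe/n)^{n/2}·(n³ + n² + n/2 + 1/30)^{-1/6}·exp(11/(720(n-10)⁴)), where Ω_n = π^{n/2}/Γ(n/2+1). -/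
set_option maxHeartbeats 2000000
open Real Filter

noncomputable def vv (z : ℝ) : ℝ := (120*z^2+30*z+1)/(240*z^3)
noncomputable def Pf (z : ℝ) : ℝ := (vv z - (vv z)^2/2 + (vv z)^3/3 - (vv z)^4/4 + (vv z)^5/5)/6
noncomputable def Gf (y : ℝ) : ℝ :=
  (y+1/2) * (1/y - 1/(2*y^2) + 1/(3*y^3) - 1/(4*y^4) + 1/(5*y^5) - 1/(6*y^6) + 1/(7*y^7) - 1/(8*y^8)) - 1
noncomputable def dd (y : ℝ) : ℝ :=
  Real.log (Real.Gamma (y+1)) - ((y + 1/2) * Real.log y - y + Real.log (2*Real.pi) / 2)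
noncomputable def ps (z : ℝ) : ℝ :=
  Real.log (1 + 1/(2*z) + 1/(8*z^2) + 1/(240*z^3)) / 6


lemma N1_pos (y : ℝ) (hy : 12 ≤ y) : 0 < (7 + 1155*y + 83685*y^2 + 3513335*y^3 + 95207805*y^4 + 1762041771*y^5 + 23079552685*y^6 + 10670541955395*y^7 + 150549694143495*y^8 + 978624562681285*y^9 + 3827050352610771*y^10 + 9890445692381205*y^11 + 17266407750007535*y^12 + 19124930461612185*y^13 + 8446764270267855*y^14 + -12861756625497900*y^15 + -32358984064962600*y^16 + -38065023581083200*y^17 + -29592839155194000*y^18 + -16158962176560000*y^19 + -6150134051712000*y^20 + -1525119382080000*y^21 + -193513605120000*y^22 + 6934325760000*y^23 + 6059888640000*y^24 + 638668800000*y^25) := by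
  have hw : (0:ℝ) ≤ y - 12 := by linarith
  have e : (7 + 1155*y + 83685*y^2 + 3513335*y^3 + 95207805*y^4 + 1762041771*y^5 + 23079552685*y^6 + 10670541955395*y^7 + 150549694143495*y^8 + 978624562681285*y^9 + 3827050352610771*y^10 + 9890445692381205*y^11 + 17266407750007535*y^12 + 19124930461612185*y^13 + 8446764270267855*y^14 + -12861756625497900*y^15 + -32358984064962600*y^16 + -38065023581083200*y^17 + -29592839155194000*y^18 + -16158962176560000*y^19 + -6150134051712000*y^20 + -1525119382080000*y^21 + -193513605120000*y^22 + 6934325760000*y^23 + 6059888640000*y^24 + 638668800000*y^25) = 930332217932076818937847109717600516923 + 1953412202076878880458560301792847235275*(y-12) + 1961494175683913085237300694787501283585*(y-12)^2 + 1254219294869096657212759734570965915975*(y-12)^3 + 573626453705483987304034037529064146945*(y-12)^4 + 199805872402934647990360366447837275075*(y-12)^5 + 55101038961229679824690825260611678185*(y-12)^6 + 12345909656723549181979905651891677475*(y-12)^7 + 2288381556827844556223409053355379155*(y-12)^8 + 355420953363151396315488796106156125*(y-12)^9 + 46678674673899822145094514039213831*(y-12)^10 + 5216448035779878797140092846989925*(y-12)^11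 + 498001590276006156219808152997115*(y-12)^12 + 40694421698421299488667412795825*(y-12)^13 + 2846601993001179457424856069855*(y-12)^14 + 170151941244386009182327526100*(y-12)^15 + 8658206892121981861503216600*(y-12)^16 + 372789936459263486038132800*(y-12)^17 + 13461164152096205893446000*(y-12)^18 + 402541631098698505680000*(y-12)^19 + 9793119047282218368000*(y-12)^20 + 188923777881992640000*(y-12)^21 + 2780889853132800000*(y-12)^22 + 29342674414080000*(y-12)^23 + 197660528640000*(y-12)^24 + 638668800000*(y-12)^25 := by ring
  linarith [e, mul_nonneg (by norm_num : (0:ℝ) ≤ 1953412202076878880458560301792847235275) (pow_nonneg hw 1), mul_nonneg (by norm_num : (0:ℝ) ≤ 1961494175683913085237300694787501283585) (pow_nonneg hw 2), mul_nonneg (by norm_num : (0:ℝ) ≤ 1254219294869096657212759734570965915975) (pow_nonneg hw 3), mul_nonneg (by norm_num : (0:ℝ) ≤ 573626453705483987304034037529064146945) (pow_nonneg hw 4), mul_nonneg (by norm_num : (0:ℝ) ≤ 199805872402934647990360366447837275075) (pow_nonneg hw 5), mul_nonneg (by norm_num : (0:ℝ) ≤ 55101038961229679824690825260611678185) (pow_nonneg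 hw 6), mul_nonneg (by norm_num : (0:ℝ) ≤ 12345909656723549181979905651891677475) (pow_nonneg hw 7), mul_nonneg (by norm_num : (0:ℝ) ≤ 2288381556827844556223409053355379155) (pow_nonneg hw 8), mul_nonneg (by norm_num : (0:ℝ) ≤ 355420953363151396315488796106156125) (pow_nonneg hw 9), mul_nonneg (by norm_num : (0:ℝ) ≤ 46678674673899822145094514039213831) (pow_nonneg hw 10), mul_nonneg (by norm_num : (0:ℝ) ≤ 5216448035779878797140092846989925) (pow_nonneg hw 11), mul_nonneg (by norm_num : (0:ℝ) ≤ 498001590276006156219808152997115) (pow_nonneg hw 12), mul_nonneg (by norm_num : (0:ℝ) ≤ 40694421698421299488667412795825) (pow_nonneg hw 13), mul_nonneg (by norm_num : (0:ℝ) ≤ 2846601993001179457424856069855) (pow_nonneg hw 14), mul_nonneg (by norm_num : (0:ℝ) ≤ 170151941244386009182327526100) (pow_nonneg hw 15), mul_nonneg (by norm_num : (0:ℝ) ≤ 8658206892121981861503216600) (pow_nonneg hw 16), mul_nonneg (by norm_num : (0:ℝ) ≤ 372789936459263486038132800) (pow_nonneg hw 17), mul_nonneg (by norm_num : (0:ℝ)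 ≤ 13461164152096205893446000) (pow_nonneg hw 18), mul_nonneg (by norm_num : (0:ℝ) ≤ 402541631098698505680000) (pow_nonneg hw 19), mul_nonneg (by norm_num : (0:ℝ) ≤ 9793119047282218368000) (pow_nonneg hw 20), mul_nonneg (by norm_num : (0:ℝ) ≤ 188923777881992640000) (pow_nonneg hw 21), mul_nonneg (by norm_num : (0:ℝ) ≤ 2780889853132800000) (pow_nonneg hw 22), mul_nonneg (by norm_num : (0:ℝ) ≤ 29342674414080000) (pow_nonneg hw 23), mul_nonneg (by norm_num : (0:ℝ) ≤ 197660528640000) (pow_nonneg hw 24), mul_nonneg (by norm_num : (0:ℝ) ≤ 638668800000) (pow_nonneg hw 25)]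
lemma N2_pos (y : ℝ) (hy : 12 ≤ y) : 0 < (-1120000 + -182784000*y + -13058544800*y^2 + -538293101360*y^3 + -14240237547207*y^4 + -255293791630423*y^5 + -3206461143713667*y^6 + -1701029161808606553*y^7 + -26370767322263237562*y^8 + -186445158047850942896*y^9 + -790780794449741845944*y^10 + -2234537551571131482676*y^11 + -4403222374334059001434*y^12 + -6111397381442677113426*y^13 + -5798175359290676033546*y^14 + -3317787553510536377294*y^15 + -473917679947874309376*y^16 + 868936238544193565516*y^17 + 655762209194191501004*y^18 + 77326134157972131225*y^19 + -118681798146569136605*y^20 + -47863840096025232405*y^21 + 9370574735754470145*y^22 + 7594399469596231500*y^23 + -657930129076116600*y^24 + -778868329357612800*y^25 + 75859558492986000*y^26 + 44809380343728000*y^27 + -9095588143488000*y^28 + 261421093440000*y^29 + 412244812800000*y^30 + -153510474240000*y^31 + 15660656640000*y^32) := by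
  have hw : (0:ℝ) ≤ y - 12 := by linarith
  have e : (-1120000 + -182784000*y + -13058544800*y^2 + -538293101360*y^3 + -14240237547207*y^4 + -255293791630423*y^5 + -3206461143713667*y^6 + -1701029161808606553*y^7 + -26370767322263237562*y^8 + -186445158047850942896*y^9 + -790780794449741845944*y^10 + -2234537551571131482676*y^11 + -4403222374334059001434*y^12 + -6111397381442677113426*y^13 + -5798175359290676033546*y^14 + -3317787553510536377294*y^15 + -473917679947874309376*y^16 + 868936238544193565516*y^17 + 655762209194191501004*y^18 + 77326134157972131225*y^19 + -118681798146569136605*y^20 + -47863840096025232405*y^21 + 9370574735754470145*y^22 + 7594399469596231500*y^23 + -657930129076116600*y^24 + -778868329357612800*y^25 + 75859558492986000*y^26 + 44809380343728000*y^27 + -9095588143488000*y^28 + 261421093440000*y^29 + 412244812800000*y^30 + -153510474240000*y^31 + 15660656640000*y^32) = 192354800918457200497400288435955358495489544192 + 534211090177201352366151692453958192702751979520*(y-12) + 718065024229531455100232082976844147454717136768*(y-12)^2 + 622235677563646711857395151068234910370979184160*(y-12)^3 + 390632444729160077065269891610422645888817360197*(y-12)^4 + 189290108136962093039174967107663054665593126785*(y-12)^5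 + 73657969633370470338880755372818292446180566473*(y-12)^6 + 23642492247542965568780220548948186539981553895*(y-12)^7 + 6380741564937676019237549265047701250339154822*(y-12)^8 + 1468614576382291881369623378111030583784574800*(y-12)^9 + 291375943764072582060750103801881266054933304*(y-12)^10 + 50241361903267096331996485663038743492402540*(y-12)^11 + 7576106674458968823730795592460597332638286*(y-12)^12 + 1003822890595184461226548958352748969873470*(y-12)^13 + 117271694633062828445862912213337237160734*(y-12)^14 + 12108188880545186456896095693532727621170*(y-12)^15 + 1106406432625788822647589215009617164816*(y-12)^16 + 89516144733715175828500343387234470940*(y-12)^17 + 6409905257963398258152127267954086704*(y-12)^18 + 405676469867416755801053759146036425*(y-12)^19 + 22639938766474356617292284383207015*(y-12)^20 + 1110332835271442720477038900458675*(y-12)^21 + 47629749205578035676915419093745*(y-12)^22 + 1776026761601608767355939610700*(y-12)^23 + 57098958199116009193381643400*(y-12)^24 + 1565950308082405505440387200*(y-12)^25 + 36120898428843304416762000*(y-12)^26 + 687481875445485178800000*(y-12)^27 + 10511161740923317632000*(y-12)^28 + 124095216981234240000*(y-12)^29 + 1061853088250880000*(y-12)^30 + 5860181675520000*(y-12)^31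 + 15660656640000*(y-12)^32 := by ring
  linarith [e, mul_nonneg (by norm_num : (0:ℝ) ≤ 534211090177201352366151692453958192702751979520) (pow_nonneg hw 1), mul_nonneg (by norm_num : (0:ℝ) ≤ 718065024229531455100232082976844147454717136768) (pow_nonneg hw 2), mul_nonneg (by norm_num : (0:ℝ) ≤ 622235677563646711857395151068234910370979184160) (pow_nonneg hw 3), mul_nonneg (by norm_num : (0:ℝ) ≤ 390632444729160077065269891610422645888817360197) (pow_nonneg hw 4), mul_nonneg (by norm_num : (0:ℝ) ≤ 189290108136962093039174967107663054665593126785) (pow_nonneg hw 5), mul_nonneg (by norm_num : (0:ℝ) ≤ 73657969633370470338880755372818292446180566473) (pow_nonneg hw 6), mul_nonneg (by norm_num : (0:ℝ) ≤ 23642492247542965568780220548948186539981553895) (pow_nonneg hw 7), mul_nonneg (by norm_num : (0:ℝ) ≤ 6380741564937676019237549265047701250339154822) (pow_nonneg hw 8), mul_nonneg (by norm_num : (0:ℝ) ≤ 1468614576382291881369623378111030583784574800) (pow_nonneg hw 9), mul_nonneg (by norm_num : (0:ℝ) ≤ 291375943764072582060750103801881266054933304) (pow_nonneg hw 10), mul_nonneg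 (by norm_num : (0:ℝ) ≤ 50241361903267096331996485663038743492402540) (pow_nonneg hw 11), mul_nonneg (by norm_num : (0:ℝ) ≤ 7576106674458968823730795592460597332638286) (pow_nonneg hw 12), mul_nonneg (by norm_num : (0:ℝ) ≤ 1003822890595184461226548958352748969873470) (pow_nonneg hw 13), mul_nonneg (by norm_num : (0:ℝ) ≤ 117271694633062828445862912213337237160734) (pow_nonneg hw 14), mul_nonneg (by norm_num : (0:ℝ) ≤ 12108188880545186456896095693532727621170) (pow_nonneg hw 15), mul_nonneg (by norm_num : (0:ℝ) ≤ 1106406432625788822647589215009617164816) (pow_nonneg hw 16), mul_nonneg (by norm_num : (0:ℝ) ≤ 89516144733715175828500343387234470940) (pow_nonneg hw 17), mul_nonneg (by norm_num : (0:ℝ) ≤ 6409905257963398258152127267954086704) (pow_nonneg hw 18), mul_nonneg (by norm_num : (0:ℝ) ≤ 405676469867416755801053759146036425) (pow_nonneg hw 19), mul_nonneg (by norm_num : (0:ℝ) ≤ 22639938766474356617292284383207015) (pow_nonneg hw 20), mul_nonneg (by norm_num : (0:ℝ) ≤ 1110332835271442720477038900458675) (pow_nonneg hw 21), mul_nonneg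 (by norm_num : (0:ℝ) ≤ 47629749205578035676915419093745) (pow_nonneg hw 22), mul_nonneg (by norm_num : (0:ℝ) ≤ 1776026761601608767355939610700) (pow_nonneg hw 23), mul_nonneg (by norm_num : (0:ℝ) ≤ 57098958199116009193381643400) (pow_nonneg hw 24), mul_nonneg (by norm_num : (0:ℝ) ≤ 1565950308082405505440387200) (pow_nonneg hw 25), mul_nonneg (by norm_num : (0:ℝ) ≤ 36120898428843304416762000) (pow_nonneg hw 26), mul_nonneg (by norm_num : (0:ℝ) ≤ 687481875445485178800000) (pow_nonneg hw 27), mul_nonneg (by norm_num : (0:ℝ) ≤ 10511161740923317632000) (pow_nonneg hw 28), mul_nonneg (by norm_num : (0:ℝ) ≤ 124095216981234240000) (pow_nonneg hw 29), mul_nonneg (by norm_num : (0:ℝ) ≤ 1061853088250880000) (pow_nonneg hw 30), mul_nonneg (by norm_num : (0:ℝ) ≤ 5860181675520000) (pow_nonneg hw 31), mul_nonneg (by norm_num : (0:ℝ) ≤ 15660656640000) (pow_nonneg hw 32)]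
lemma I1 (y : ℝ) (hy : 12 ≤ y) :
    1/(300*y^6) + 1/(300*(y+1)^6) + 1/(10*y^7) < Pf y - Pf (y+1) - Gf y := by
  have hy0 : (0:ℝ) < y := by linarith
  have hy1 : (0:ℝ) < y+1 := by linarith
  have hD : (0:ℝ) < 167215104000000*y^15*(y+1)^15 := by positivity
  have key : Pf y - Pf (y+1) - Gf y - (1/(300*y^6) + 1/(300*(y+1)^6) + 1/(10*y^7))
      = (7 + 1155*y + 83685*y^2 + 3513335*y^3 + 95207805*y^4 + 1762041771*y^5 + 23079552685*y^6 + 10670541955395*y^7 + 150549694143495*y^8 + 978624562681285*y^9 + 3827050352610771*y^10 + 9890445692381205*y^11 + 17266407750007535*y^12 + 19124930461612185*y^13 + 8446764270267855*y^14 + -12861756625497900*y^15 + -32358984064962600*y^16 + -38065023581083200*y^17 + -29592839155194000*y^18 + -16158962176560000*y^19 + -6150134051712000*y^20 + -1525119382080000*y^21 + -193513605120000*y^22 + 6934325760000*y^23 + 6059888640000*y^24 + 638668800000*y^25) / (167215104000000*y^15*(y+1)^15) := by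
    unfold Pf Gf vv
    rw [eq_div_iff (ne_of_gt hD)]
    field_simp
    ring
  have := N1_pos y hy
  linarith [div_pos this hD, key]


lemma I2 (y : ℝ) (hy : 12 ≤ y) :
    Pf y - Pf (y+1) - Gf y + (1/(300*y^6) + 1/(300*(y+1)^6) + 1/(10*y^7))
      < 11/(11520*(y-5)^4) - 11/(11520*(y-4)^4) := by
  have hy0 : (0:ℝ) < y := by linarith
  have hy1 : (0:ℝ) < y+1 := by linarith
  have hy5 : (0:ℝ) < y-5 := by linarith
  have hy4 : (0:ℝ) < y-4 := by linarith
  have hD : (0:ℝ) < 167215104000000*y^15*(y+1)^15*(y-5)^4*(y-4)^4 := by positivity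
  have key : 11/(11520*(y-5)^4) - 11/(11520*(y-4)^4)
      - (Pf y - Pf (y+1) - Gf y + (1/(300*y^6) + 1/(300*(y+1)^6) + 1/(10*y^7)))
      = (-1120000 + -182784000*y + -13058544800*y^2 + -538293101360*y^3 + -14240237547207*y^4 + -255293791630423*y^5 + -3206461143713667*y^6 + -1701029161808606553*y^7 + -26370767322263237562*y^8 + -186445158047850942896*y^9 + -790780794449741845944*y^10 + -2234537551571131482676*y^11 + -4403222374334059001434*y^12 + -6111397381442677113426*y^13 + -5798175359290676033546*y^14 + -3317787553510536377294*y^15 + -473917679947874309376*y^16 + 868936238544193565516*y^17 + 655762209194191501004*y^18 + 77326134157972131225*y^19 + -118681798146569136605*y^20 + -47863840096025232405*y^21 + 9370574735754470145*y^22 + 7594399469596231500*y^23 + -657930129076116600*y^24 + -778868329357612800*y^25 + 75859558492986000*y^26 + 44809380343728000*y^27 + -9095588143488000*y^28 + 261421093440000*y^29 + 412244812800000*y^30 + -153510474240000*y^31 + 15660656640000*y^32) / (167215104000000*y^15*(y+1)^15*(y-5)^4*(y-4)^4) := by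
    unfold Pf Gf vv
    rw [eq_div_iff (ne_of_gt hD)]
    field_simp
    ring
  have := N2_pos y hy
  linarith [div_pos this hD, key]

lemma psi_approx {z : ℝ} (hz : 12 ≤ z) : |ps z - Pf z| ≤ 1/(300*z^6) := by
  have hz0 : (0:ℝ) < z := by linarith
  set V := vv z with hV
  have hVval : V = (120*z^2+30*z+1)/(240*z^3) := rfl
  have hV0 : 0 < V := by rw [hVval]; positivity
  have hVle : V ≤ 1/23 := by
    rw [hVval, div_le_div_iff₀ (by positivity) (by norm_num)]
    nlinarith [sq_nonneg z, hz0]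
  have habs : |(-V)| < 1 := by rw [abs_neg, abs_of_pos hV0]; linarith
  have H := Real.abs_log_sub_add_sum_range_le habs 5
  have hsum : (∑ i ∈ Finset.range 5, (-V)^(i+1)/((i:ℝ)+1)) = -(V - V^2/2 + V^3/3 - V^4/4 + V^5/5) := by
    simp [Finset.sum_range_succ]
    ring
  rw [hsum, sub_neg_eq_add, abs_neg, abs_of_pos hV0] at H
  have harg : 1 + 1/(2*z) + 1/(8*z^2) + 1/(240*z^3) = 1 + V := by
    rw [hVval]; field_simp; ring
  have hps : ps z = Real.log (1+V) / 6 := by rw [ps, harg]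
  have hPf : Pf z = (V - V^2/2 + V^3/3 - V^4/4 + V^5/5)/6 := rfl
  -- bound V^6/(1-V) ≤ 1/(50 z^6)
  have hV2 : V ≤ 41/(80*z) := by
    rw [hVval, div_le_div_iff₀ (by positivity) (by positivity)]
    nlinarith [sq_nonneg z, hz0]
  have h6 : V^6 ≤ (41/(80*z))^6 := by
    exact pow_le_pow_left₀ hV0.le hV2 6
  have hbound : V^6/(1-V) ≤ 1/(50*z^6) := by
    rw [div_le_div_iff₀ (by linarith : (0:ℝ) < 1-V) (by positivity)]
    have h7 : (41/(80*z))^6 * (50*z^6) = 237505212050/262144000000 := by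
      field_simp; ring
    nlinarith [mul_le_mul_of_nonneg_right h6 (by positivity : (0:ℝ) ≤ 50*z^6)]
  rw [hps, hPf]
  rw [show Real.log (1+V)/6 - (V - V^2/2 + V^3/3 - V^4/4 + V^5/5)/6
      = (-(V - V^2/2 + V^3/3 - V^4/4 + V^5/5) + Real.log (1+V))/6 by ring]
  rw [abs_div, abs_of_pos (by norm_num : (0:ℝ) < 6)]
  calc |(-(V - V^2/2 + V^3/3 - V^4/4 + V^5/5) + Real.log (1+V))|/6 ≤ (V^6/(1-V))/6 := by
        linarith [H]
    _ ≤ (1/(50*z^6))/6 := by linarith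
    _ = 1/(300*z^6) := by ring

lemma g_approx {y : ℝ} (hy : 12 ≤ y) :
    |(y+1/2) * Real.log ((y+1)/y) - 1 - Gf y| ≤ 1/(10*y^7) := by
  have hy0 : (0:ℝ) < y := by linarith
  have habs : |(-(1/y))| < 1 := by
    rw [abs_neg, abs_of_pos (by positivity)]
    rw [div_lt_one hy0]; linarith
  have H := Real.abs_log_sub_add_sum_range_le habs 8
  have hsum : (∑ i ∈ Finset.range 8, (-(1/y))^(i+1)/((i:ℝ)+1))
      = -(1/y - 1/(2*y^2) + 1/(3*y^3) - 1/(4*y^4) + 1/(5*y^5) - 1/(6*y^6) + 1/(7*y^7) - 1/(8*y^8)) := by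
    simp [Finset.sum_range_succ]
    ring
  rw [hsum, sub_neg_eq_add, abs_neg, abs_of_pos (by positivity : (0:ℝ) < 1/y)] at H
  have harg : (y+1)/y = 1 + 1/y := by field_simp
  have key : (y+1/2) * Real.log ((y+1)/y) - 1 - Gf y
      = (y+1/2) * ((-(1/y - 1/(2*y^2) + 1/(3*y^3) - 1/(4*y^4) + 1/(5*y^5) - 1/(6*y^6) + 1/(7*y^7) - 1/(8*y^8))) + Real.log (1+1/y)) := by
    rw [harg]; unfold Gf; ring
  rw [key, abs_mul, abs_of_pos (by linarith : (0:ℝ) < y+1/2)]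
  have hb2 : (y+1/2) * ((1/y)^9/(1-1/y)) ≤ 1/(10*y^7) := by
    have he : (y+1/2) * ((1/y)^9/(1-1/y)) = (y+1/2)/(y^8*(y-1)) := by
      have hym : y - 1 ≠ 0 := by linarith
      field_simp
    rw [he, div_le_div_iff₀ (by nlinarith [pow_pos hy0 8]) (by positivity)]
    have h1 : (12:ℝ)*y^8 ≤ y*y^8 := by nlinarith [pow_pos hy0 8]
    have h2 : (12:ℝ)*y^7 ≤ y*y^7 := by nlinarith [pow_pos hy0 7]
    nlinarith [pow_pos hy0 7, pow_pos hy0 8]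
  calc (y+1/2) * |(-(1/y - 1/(2*y^2) + 1/(3*y^3) - 1/(4*y^4) + 1/(5*y^5) - 1/(6*y^6) + 1/(7*y^7) - 1/(8*y^8))) + Real.log (1+1/y)|
      ≤ (y+1/2) * ((1/y)^9/(1-1/y)) := by
        have := mul_le_mul_of_nonneg_left H (by linarith : (0:ℝ) ≤ y+1/2)
        linarith
    _ ≤ 1/(10*y^7) := hb2

lemma dd_step {y : ℝ} (hy : 0 < y) :
    dd y - dd (y+1) = (y+1/2) * Real.log ((y+1)/y) - 1 := by
  have hy1 : (0:ℝ) < y + 1 := by linarith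
  have hG : Real.Gamma (y+1+1) = (y+1) * Real.Gamma (y+1) := Real.Gamma_add_one (by linarith)
  have hGpos : 0 < Real.Gamma (y+1) := Real.Gamma_pos_of_pos (by linarith)
  rw [dd, dd, hG, Real.log_mul (by linarith) hGpos.ne', Real.log_div hy1.ne' hy.ne']
  ring


lemma Fstep {y : ℝ} (hy : 12 ≤ y) :
    0 < (ps y - dd y) - (ps (y+1) - dd (y+1)) ∧
    (ps y - dd y) - (ps (y+1) - dd (y+1)) < 11/(11520*(y-5)^4) - 11/(11520*(y-4)^4) := by
  have hy0 : (0:ℝ) < y := by linarith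
  have h1 := psi_approx hy
  have h2 := psi_approx (by linarith : (12:ℝ) ≤ y+1)
  have h3 := g_approx hy
  have h4 := dd_step hy0
  have hI1 := I1 y hy
  have hI2 := I2 y hy
  rw [abs_le] at h1 h2 h3
  constructor
  · have : (ps y - dd y) - (ps (y+1) - dd (y+1)) = (ps y - Pf y) - (ps (y+1) - Pf (y+1))
        - (((y+1/2) * Real.log ((y+1)/y) - 1) - Gf y) + (Pf y - Pf (y+1) - Gf y) := by
      rw [← h4]; ring
    rw [this]; linarith
  · have : (ps y - dd y) - (ps (y+1) - dd (y+1)) = (ps y - Pf y) - (ps (y+1) - Pf (y+1))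
        - (((y+1/2) * Real.log ((y+1)/y) - 1) - Gf y) + (Pf y - Pf (y+1) - Gf y) := by
      rw [← h4]; ring
    rw [this]; linarith

lemma key_of_lim {x : ℝ} (hx : 12 ≤ x)
    (hlim : Filter.Tendsto (fun k : ℕ => ps (x+k) - dd (x+k)) Filter.atTop (nhds 0)) :
    0 < ps x - dd x ∧ ps x - dd x < 11/(11520*(x-5)^4) := by
  set F : ℕ → ℝ := fun k => ps (x+k) - dd (x+k) with hF
  set B : ℕ → ℝ := fun k => 11/(11520*(x+k-5)^4) with hB
  have hxk : ∀ k : ℕ, (12:ℝ) ≤ x + k := by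
    intro k
    have : (0:ℝ) ≤ k := Nat.cast_nonneg k
    linarith
  have hstep : ∀ k : ℕ, 0 < F k - F (k+1) ∧ F k - F (k+1) < B k - B (k+1) := by
    intro k
    have h := Fstep (hxk k)
    have e1 : x + (k+1 : ℕ) = (x + k) + 1 := by push_cast; ring
    have e2 : x + (k+1 : ℕ) - 5 = (x + k) - 4 := by push_cast; ring
    constructor
    · have := h.1
      simp only [hF, e1]
      exact this
    · have := h.2
      simp only [hF, hB, e1, e2]
      convert this using 3
      push_cast; ring
  -- lower bound
  have hanti : StrictAnti F := strictAnti_nat_of_succ_lt (fun k => by linarith [(hstep k).1])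
  have hF1 : 0 ≤ F 1 := by
    refine le_of_tendsto hlim ?_
    filter_upwards [Filter.eventually_ge_atTop 1] with m hm
    exact hanti.antitone hm
  have hlow : 0 < F 0 := by linarith [(hstep 0).1]
  -- upper bound
  have hBlim : Filter.Tendsto B Filter.atTop (nhds 0) := by
    have h1 : Filter.Tendsto (fun k : ℕ => x + (k:ℝ) - 5) Filter.atTop Filter.atTop := by
      apply Filter.tendsto_atTop_add_const_right
      exact Filter.tendsto_atTop_add_const_left _ _ tendsto_natCast_atTop_atTop
    have h2 : Filter.Tendsto (fun k : ℕ => 11520*(x + (k:ℝ) - 5)^4) Filter.atTop Filter.atTop := by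
      apply Filter.Tendsto.const_mul_atTop (by norm_num : (0:ℝ) < 11520)
      exact (tendsto_pow_atTop (by norm_num : 4 ≠ 0)).comp h1
    have h3 : Filter.Tendsto (fun k : ℕ => 11 * (11520*(x + (k:ℝ) - 5)^4)⁻¹)
        Filter.atTop (nhds (11 * 0)) := Filter.Tendsto.const_mul _ h2.inv_tendsto_atTop
    have h4 : ∀ k : ℕ, B k = 11 * (11520*(x + (k:ℝ) - 5)^4)⁻¹ := by
      intro k; simp only [hB, div_eq_mul_inv]
    simpa using Filter.Tendsto.congr (fun k => (h4 k).symm) h3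
  have hGlim : Filter.Tendsto (fun k => F k - B k) Filter.atTop (nhds 0) := by
    simpa using hlim.sub hBlim
  have hmono : StrictMono (fun k => F k - B k) :=
    strictMono_nat_of_lt_succ (fun k => by linarith [(hstep k).2])
  have hG1 : F 1 - B 1 ≤ 0 := by
    refine ge_of_tendsto hGlim ?_
    filter_upwards [Filter.eventually_ge_atTop 1] with m hm
    exact hmono.monotone hm
  have hG0 : F 0 - B 0 < F 1 - B 1 := hmono (by norm_num)
  have hup : F 0 < B 0 := by linarith
  have e0 : F 0 = ps x - dd x := by simp [hF]
  have eB0 : B 0 = 11/(11520*(x-5)^4) := by simp [hB]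
  rw [e0] at hlow hup; rw [eB0] at hup
  exact ⟨hlow, hup⟩

lemma tendsto_ddN : Filter.Tendsto (fun m : ℕ => dd m) Filter.atTop (nhds 0) := by
  have heq : ∀ m : ℕ, 1 ≤ m → dd m = Real.log (Stirling.stirlingSeq m) - Real.log (Real.sqrt Real.pi) := by
    intro m hm
    have hm0 : (0:ℝ) < m := by exact_mod_cast hm
    have hfac : (0:ℝ) < (m.factorial : ℝ) := by exact_mod_cast Nat.factorial_pos m
    have hsq : (0:ℝ) < Real.sqrt (2*m) := Real.sqrt_pos.mpr (by linarith)
    have hpow : (0:ℝ) < ((m:ℝ) / Real.exp 1) ^ m := pow_pos (by positivity) m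
    rw [dd, Stirling.stirlingSeq, Real.Gamma_nat_eq_factorial,
      Real.log_div hfac.ne' (by positivity), Real.log_mul hsq.ne' hpow.ne',
      Real.log_pow, Real.log_div hm0.ne' (Real.exp_pos 1).ne', Real.log_exp,
      Real.log_sqrt (by linarith : (0:ℝ) ≤ 2*m), Real.log_mul (by norm_num : (2:ℝ) ≠ 0) hm0.ne',
      Real.log_mul (by norm_num : (2:ℝ) ≠ 0) Real.pi_pos.ne', Real.log_sqrt Real.pi_pos.le]
    ring
  have hlim : Filter.Tendsto (fun m : ℕ => Real.log (Stirling.stirlingSeq m) - Real.log (Real.sqrt Real.pi))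
      Filter.atTop (nhds 0) := by
    have h1 : Filter.Tendsto (fun m : ℕ => Real.log (Stirling.stirlingSeq m)) Filter.atTop
        (nhds (Real.log (Real.sqrt Real.pi))) := by
      exact ((Real.continuousAt_log (Real.sqrt_pos.mpr Real.pi_pos).ne').tendsto).comp
        Stirling.tendsto_stirlingSeq_sqrt_pi
    simpa using h1.sub_const (Real.log (Real.sqrt Real.pi))
  refine hlim.congr' ?_
  filter_upwards [Filter.eventually_ge_atTop 1] with m hm
  exact (heq m hm).symm

lemma dd_half_eq (m : ℕ) (hm : 1 ≤ m) :
    dd ((m:ℝ) + 1/2) = dd ((2*m+1 : ℕ)) - dd m + ((m:ℝ)+1/2) * Real.log (1 + 1/(2*m)) - 1/2 := by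
  have hm0 : (0:ℝ) < m := by exact_mod_cast hm
  have h1 : (0:ℝ) < (m:ℝ) + 1 := by linarith
  have hdup := Real.Gamma_mul_Gamma_add_half ((m:ℝ) + 1)
  have hG1 : 0 < Real.Gamma ((m:ℝ)+1) := Real.Gamma_pos_of_pos (by linarith)
  have hG2 : 0 < Real.Gamma ((m:ℝ)+1+1/2) := Real.Gamma_pos_of_pos (by linarith)
  have hG3 : 0 < Real.Gamma (2*((m:ℝ)+1)) := Real.Gamma_pos_of_pos (by linarith)
  have hrp : (0:ℝ) < (2:ℝ) ^ (1 - 2*((m:ℝ)+1)) := Real.rpow_pos_of_pos two_pos _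
  have hsp : (0:ℝ) < Real.sqrt Real.pi := Real.sqrt_pos.mpr Real.pi_pos
  have hlogdup : Real.log (Real.Gamma ((m:ℝ)+1)) + Real.log (Real.Gamma ((m:ℝ)+1+1/2))
      = Real.log (Real.Gamma (2*((m:ℝ)+1))) + (1 - 2*((m:ℝ)+1)) * Real.log 2 + Real.log Real.pi / 2 := by
    rw [← Real.log_mul hG1.ne' hG2.ne', hdup, Real.log_mul (by positivity) hsp.ne',
      Real.log_mul hG3.ne' hrp.ne', Real.log_rpow two_pos, Real.log_sqrt Real.pi_pos.le]
  -- rewrite the Gamma arguments appearing in dd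
  have e1 : (m:ℝ) + 1/2 + 1 = (m:ℝ) + 1 + 1/2 := by ring
  have e2 : ((2*m+1 : ℕ):ℝ) + 1 = 2*((m:ℝ)+1) := by push_cast; ring
  have e3 : ((2*m+1 : ℕ):ℝ) = 2*(m:ℝ)+1 := by push_cast; ring
  have hlog2m1 : Real.log (2*(m:ℝ)+1) = Real.log 2 + Real.log ((m:ℝ)+1/2) := by
    rw [show 2*(m:ℝ)+1 = 2*((m:ℝ)+1/2) by ring, Real.log_mul (by norm_num) (by linarith)]
  have hlog1p : Real.log (1 + 1/(2*(m:ℝ))) = Real.log ((m:ℝ)+1/2) - Real.log m := by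
    rw [show (1:ℝ) + 1/(2*(m:ℝ)) = ((m:ℝ)+1/2)/m by field_simp,
      Real.log_div (by linarith) hm0.ne']
  have hlog2pi : Real.log (2*Real.pi) = Real.log 2 + Real.log Real.pi :=
    Real.log_mul (by norm_num) Real.pi_pos.ne'
  rw [dd, dd, dd, e1, e2, e3, hlog2m1, hlog1p, hlog2pi]
  linarith [hlogdup]

lemma tendsto_dd_half : Filter.Tendsto (fun m : ℕ => dd ((m:ℝ) + 1/2)) Filter.atTop (nhds 0) := by
  have h2m : Filter.Tendsto (fun m : ℕ => 2*m+1) Filter.atTop Filter.atTop :=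
    Filter.tendsto_atTop_mono (fun m => by simp only [id_eq]; omega) Filter.tendsto_id
  have hA : Filter.Tendsto (fun m : ℕ => dd ((2*m+1 : ℕ))) Filter.atTop (nhds 0) :=
    tendsto_ddN.comp h2m
  have hcast : Filter.Tendsto (fun m : ℕ => (m:ℝ)) Filter.atTop Filter.atTop :=
    tendsto_natCast_atTop_atTop
  have hB : Filter.Tendsto (fun m : ℕ => (m:ℝ) * Real.log (1 + (1/2)/m)) Filter.atTop (nhds (1/2)) :=
    (Real.tendsto_mul_log_one_add_div_atTop (1/2)).comp hcast
  have hlog0 : Filter.Tendsto (fun m : ℕ => Real.log (1 + (1/2)/m)) Filter.atTop (nhds 0) := by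
    have harg : Filter.Tendsto (fun m : ℕ => 1 + (1/2)/(m:ℝ)) Filter.atTop (nhds 1) := by
      have := Filter.Tendsto.div_atTop (tendsto_const_nhds : Filter.Tendsto (fun _ : ℕ => (1/2:ℝ)) Filter.atTop (nhds (1/2))) hcast
      simpa using (tendsto_const_nhds : Filter.Tendsto (fun _ : ℕ => (1:ℝ)) Filter.atTop (nhds 1)).add this
    have hcont := (Real.continuousAt_log one_ne_zero).tendsto.comp harg
    simpa [Function.comp_def] using hcont
  have hC : Filter.Tendsto (fun m : ℕ => ((m:ℝ)+1/2) * Real.log (1 + 1/(2*m))) Filter.atTop (nhds (1/2)) := by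
    have heq : ∀ m : ℕ, ((m:ℝ)+1/2) * Real.log (1 + 1/(2*m)) =
        (m:ℝ) * Real.log (1 + (1/2)/m) + (1/2) * Real.log (1 + (1/2)/m) := by
      intro m
      have : (1:ℝ) + 1/(2*(m:ℝ)) = 1 + (1/2)/m := by
        by_cases h : (m:ℝ) = 0
        · simp [h]
        · field_simp
      rw [this]; ring
    have := hB.add (hlog0.const_mul (1/2:ℝ))
    simp only [mul_zero, add_zero] at this
    exact Filter.Tendsto.congr (fun m => (heq m).symm) this
  have htot := ((hA.sub tendsto_ddN).add hC).sub_const (1/2 : ℝ)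
  have : ((0:ℝ) - 0 + 1/2) - 1/2 = 0 := by norm_num
  rw [this] at htot
  refine htot.congr' ?_
  filter_upwards [Filter.eventually_ge_atTop 1] with m hm
  exact (dd_half_eq m hm).symm

lemma tendsto_ps (x : ℝ) : Filter.Tendsto (fun k : ℕ => ps (x + k)) Filter.atTop (nhds 0) := by
  have h1 : Filter.Tendsto (fun k : ℕ => x + (k:ℝ)) Filter.atTop Filter.atTop :=
    Filter.tendsto_atTop_add_const_left _ x tendsto_natCast_atTop_atTop
  have hp : ∀ j : ℕ, j ≠ 0 → ∀ c : ℝ, 0 < c →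
      Filter.Tendsto (fun k : ℕ => 1/(c*(x+(k:ℝ))^j)) Filter.atTop (nhds 0) := by
    intro j hj c hc
    have h2 : Filter.Tendsto (fun k : ℕ => c*(x+(k:ℝ))^j) Filter.atTop Filter.atTop :=
      Filter.Tendsto.const_mul_atTop hc ((tendsto_pow_atTop hj).comp h1)
    exact h2.inv_tendsto_atTop.congr (fun k => (one_div _).symm)
  have ha := hp 1 one_ne_zero 2 two_pos
  have hb := hp 2 two_ne_zero 8 (by norm_num)
  have hc := hp 3 three_ne_zero 240 (by norm_num)
  simp only [pow_one] at ha
  have harg : Filter.Tendsto (fun k : ℕ => 1 + 1/(2*(x+(k:ℝ))) + 1/(8*(x+(k:ℝ))^2) + 1/(240*(x+(k:ℝ))^3))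
      Filter.atTop (nhds 1) := by
    have h0 := (((tendsto_const_nhds :
      Filter.Tendsto (fun _ : ℕ => (1:ℝ)) Filter.atTop (nhds 1)).add ha).add hb).add hc
    simpa using h0
  have hlog := (Real.continuousAt_log one_ne_zero).tendsto.comp harg
  simp only [Function.comp_def, Real.log_one] at hlog
  have := hlog.div_const 6
  simp only [zero_div] at this
  exact this.congr (fun k => by rw [ps])

theorem stmt_11 (Ω : ℕ → ℝ)
    (hΩ : ∀ n : ℕ, Ω n = Real.pi ^ ((n : ℝ) / 2) / Real.Gamma ((n : ℝ) / 2 + 1)) :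
    ∀ n : ℕ, 24 ≤ n →
      (1 / Real.sqrt Real.pi) * (2 * Real.pi * Real.exp 1 / n) ^ ((n : ℝ) / 2) *
          ((n : ℝ) ^ 3 + (n : ℝ) ^ 2 + (n : ℝ) / 2 + 1 / 30) ^ (-(1 / 6) : ℝ) < Ω n ∧
        Ω n <
          (1 / Real.sqrt Real.pi) * (2 * Real.pi * Real.exp 1 / n) ^ ((n : ℝ) / 2) *
              ((n : ℝ) ^ 3 + (n : ℝ) ^ 2 + (n : ℝ) / 2 + 1 / 30) ^ (-(1 / 6) : ℝ) *
            Real.exp (11 / (720 * ((n : ℝ) - 10) ^ 4)) := by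
  intro n hn
  have hn24 : (24:ℝ) ≤ (n:ℝ) := by exact_mod_cast hn
  set x : ℝ := (n:ℝ)/2 with hxdef
  have hx : (12:ℝ) ≤ x := by rw [hxdef]; linarith
  have hx0 : (0:ℝ) < x := by linarith
  have hn2x : (n:ℝ) = 2*x := by rw [hxdef]; ring
  -- limit of dd along x + k
  have hddlim : Filter.Tendsto (fun k : ℕ => dd (x+k)) Filter.atTop (nhds 0) := by
    rcases Nat.even_or_odd n with he | ho
    · obtain ⟨p, hp⟩ := he
      have hxp : x = (p:ℝ) := by
        rw [hxdef, hp]; push_cast; ring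
      have hcomp : Filter.Tendsto (fun k : ℕ => dd ((p+k : ℕ))) Filter.atTop (nhds 0) :=
        tendsto_ddN.comp (Filter.tendsto_atTop_mono (fun k => Nat.le_add_left k p) Filter.tendsto_id)
      exact hcomp.congr (fun k => by rw [show ((p+k : ℕ):ℝ) = x + k by rw [hxp]; push_cast; ring])
    · obtain ⟨p, hp⟩ := ho
      have hxp : x = (p:ℝ) + 1/2 := by
        rw [hxdef, hp]; push_cast; ring
      have hcomp : Filter.Tendsto (fun k : ℕ => dd (((p+k : ℕ):ℝ) + 1/2)) Filter.atTop (nhds 0) :=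
        tendsto_dd_half.comp (Filter.tendsto_atTop_mono (fun k => Nat.le_add_left k p) Filter.tendsto_id)
      exact hcomp.congr (fun k => by rw [show ((p+k : ℕ):ℝ) + 1/2 = x + k by rw [hxp]; push_cast; ring])
  have hlim : Filter.Tendsto (fun k : ℕ => ps (x+k) - dd (x+k)) Filter.atTop (nhds 0) := by
    simpa using (tendsto_ps x).sub hddlim
  have key := key_of_lim hx hlim
  -- positivity facts
  have hnpos : (0:ℝ) < n := by linarith
  have hGam : 0 < Real.Gamma (x+1) := Real.Gamma_pos_of_pos (by linarith)
  have hQpos : (0:ℝ) < (n:ℝ)^3 + (n:ℝ)^2 + (n:ℝ)/2 + 1/30 := by positivity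
  have hbase : (0:ℝ) < 2*Real.pi*Real.exp 1/(n:ℝ) := by
    have := Real.pi_pos; have := Real.exp_pos 1; positivity
  have hsp : (0:ℝ) < Real.sqrt Real.pi := Real.sqrt_pos.mpr Real.pi_pos
  set A : ℝ := (1 / Real.sqrt Real.pi) * (2 * Real.pi * Real.exp 1 / n) ^ ((n : ℝ) / 2) *
      ((n : ℝ) ^ 3 + (n : ℝ) ^ 2 + (n : ℝ) / 2 + 1 / 30) ^ (-(1 / 6) : ℝ) with hAdef
  have hApos : 0 < A := by
    rw [hAdef]
    have h1 : (0:ℝ) < (2 * Real.pi * Real.exp 1 / n) ^ ((n : ℝ) / 2) := Real.rpow_pos_of_pos hbase _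
    have h2 : (0:ℝ) < ((n : ℝ) ^ 3 + (n : ℝ) ^ 2 + (n : ℝ) / 2 + 1 / 30) ^ (-(1 / 6) : ℝ) :=
      Real.rpow_pos_of_pos hQpos _
    positivity
  have hΩpos : 0 < Ω n := by
    rw [hΩ n]
    exact div_pos (Real.rpow_pos_of_pos Real.pi_pos _) (by rw [← hxdef]; exact hGam)
  -- log of A
  have hvpos : (0:ℝ) < 1 + 1/(2*x) + 1/(8*x^2) + 1/(240*x^3) := by positivity
  have hQx : (n:ℝ)^3 + (n:ℝ)^2 + (n:ℝ)/2 + 1/30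
      = (8*x^3) * (1 + 1/(2*x) + 1/(8*x^2) + 1/(240*x^3)) := by
    rw [hn2x]; field_simp; ring
  have hlogQ : Real.log ((n:ℝ)^3 + (n:ℝ)^2 + (n:ℝ)/2 + 1/30)
      = Real.log 8 + 3 * Real.log x + 6 * ps x := by
    rw [hQx, Real.log_mul (by positivity) hvpos.ne', Real.log_mul (by norm_num) (by positivity),
      Real.log_pow, ps]
    ring
  have hbase2 : 2*Real.pi*Real.exp 1/(n:ℝ) = Real.pi * Real.exp 1 / x := by
    rw [hn2x]; field_simp
  have hlogbase : Real.log (2*Real.pi*Real.exp 1/(n:ℝ)) = Real.log Real.pi + 1 - Real.log x := by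
    rw [hbase2, Real.log_div (by positivity) hx0.ne', Real.log_mul Real.pi_pos.ne' (Real.exp_pos 1).ne',
      Real.log_exp]
  have hlog8 : Real.log 8 = 3 * Real.log 2 := by
    rw [show (8:ℝ) = 2^(3:ℕ) by norm_num, Real.log_pow]; norm_num
  have hlog2pi : Real.log (2*Real.pi) = Real.log 2 + Real.log Real.pi :=
    Real.log_mul (by norm_num) Real.pi_pos.ne'
  have hlogA : Real.log A = x * Real.log Real.pi
      - ((x + 1/2) * Real.log x - x + Real.log (2*Real.pi)/2) - ps x := by
    rw [hAdef, Real.log_mul (by positivity) (Real.rpow_pos_of_pos hQpos _).ne',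
      Real.log_mul (by positivity) (Real.rpow_pos_of_pos hbase _).ne',
      Real.log_rpow hbase, Real.log_rpow hQpos,
      Real.log_div one_ne_zero hsp.ne', Real.log_one, Real.log_sqrt Real.pi_pos.le,
      hlogQ, hlogbase, hlog8, hlog2pi, ← hxdef]
    ring
  have hlogΩ : Real.log (Ω n) = x * Real.log Real.pi - Real.log (Real.Gamma (x+1)) := by
    rw [hΩ n, ← hxdef, Real.log_div (Real.rpow_pos_of_pos Real.pi_pos _).ne' hGam.ne',
      Real.log_rpow Real.pi_pos]
  have hdiff : Real.log (Ω n) - Real.log A = ps x - dd x := by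
    rw [hlogΩ, hlogA, dd]; ring
  constructor
  · have : Real.log A < Real.log (Ω n) := by linarith [key.1]
    exact (Real.log_lt_log_iff hApos hΩpos).mp this
  · have hB : 11/(11520*(x-5)^4) = 11 / (720 * ((n:ℝ) - 10) ^ 4) := by
      rw [hn2x, show (720:ℝ) * (2*x - 10)^4 = 11520*(x-5)^4 by ring]
    have hexp : 0 < Real.exp (11 / (720 * ((n:ℝ) - 10) ^ 4)) := Real.exp_pos _
    have hlogright : Real.log (A * Real.exp (11 / (720 * ((n:ℝ) - 10) ^ 4)))
        = Real.log A + 11 / (720 * ((n:ℝ) - 10) ^ 4) := by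
      rw [Real.log_mul hApos.ne' hexp.ne', Real.log_exp]
    have : Real.log (Ω n) < Real.log (A * Real.exp (11 / (720 * ((n:ℝ) - 10) ^ 4))) := by
      rw [hlogright]
      have := key.2
      rw [hB] at this
      linarith
    exact (Real.log_lt_log_iff hΩpos (by positivity)).mp this
end

section
/- For every real x ≥ 12, √π·(x/e)^x·(8x³+4x²+x+1/30)^{1/6}·exp(-11/(11520(x-5)⁴)) < Γ(x+1) < √π·(x/e)^x·(8x³+4x²+x+1/30)^{1/6}. -/
set_option maxHeartbeats 1600000
open Real

namespace Rmj

lemma mono_aux {φ φ' : ℝ → ℝ} {u : ℝ} (hu : 0 ≤ u)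
    (key : ∀ t ∈ Set.Icc (0:ℝ) u, HasDerivAt φ (φ' t) t)
    (hpos : ∀ t ∈ Set.Ioo (0:ℝ) u, 0 ≤ φ' t) : φ 0 ≤ φ u := by
  have mono : MonotoneOn φ (Set.Icc 0 u) := by
    apply monotoneOn_of_deriv_nonneg (convex_Icc 0 u)
    · exact continuousOn_of_forall_continuousAt fun t ht => (key t ht).continuousAt
    · rw [interior_Icc]
      exact fun t ht => (key t ⟨ht.1.le, ht.2.le⟩).differentiableAt.differentiableWithinAt
    · rw [interior_Icc]
      intro t ht
      rw [(key t ⟨ht.1.le, ht.2.le⟩).deriv]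
      exact hpos t ht
  exact mono (Set.left_mem_Icc.mpr hu) (Set.right_mem_Icc.mpr hu) hu

lemma hasDerivAt_log_one_add {t : ℝ} (h : 0 < 1 + t) :
    HasDerivAt (fun v : ℝ => log (1+v)) (1/(1+t)) t := by
  simpa using (((hasDerivAt_id t).const_add 1).log h.ne')

lemma hasDerivAt_log_one_sub {t : ℝ} (h : (0:ℝ) < 1 - t) :
    HasDerivAt (fun v : ℝ => log (1-v)) (-(1/(1-t))) t := by
  have := (((hasDerivAt_id t).const_sub 1).log h.ne')
  refine this.congr_deriv ?_
  rw [neg_div]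
  norm_num

lemma log_le_poly5 {u : ℝ} (hu : 0 ≤ u) :
    log (1+u) ≤ u - u^2/2 + u^3/3 - u^4/4 + u^5/5 := by
  have h := mono_aux (φ := fun v => v - v^2/2 + v^3/3 - v^4/4 + v^5/5 - log (1+v))
    (φ' := fun t => 1 - t + t^2 - t^3 + t^4 - 1/(1+t)) hu ?_ ?_
  · simpa using h
  · intro t ht
    have h1 : (0:ℝ) < 1 + t := by nlinarith [ht.1]
    have hp : HasDerivAt (fun v : ℝ => v - v^2/2 + v^3/3 - v^4/4 + v^5/5)
        (1 - t + t^2 - t^3 + t^4) t := by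
      have := ((((hasDerivAt_id t).sub ((hasDerivAt_pow 2 t).div_const 2)).add
        ((hasDerivAt_pow 3 t).div_const 3)).sub ((hasDerivAt_pow 4 t).div_const 4)).add
        ((hasDerivAt_pow 5 t).div_const 5)
      refine this.congr_deriv ?_; ring
    exact hp.sub (hasDerivAt_log_one_add h1)
  · intro t ht
    have h1 : (0:ℝ) < 1 + t := by nlinarith [ht.1]
    have : 1/(1+t) ≤ 1 - t + t^2 - t^3 + t^4 := by
      rw [div_le_iff₀ h1]; nlinarith [ht.1, pow_nonneg ht.1.le 5]
    linarith

lemma poly4_le_log {u : ℝ} (hu : 0 ≤ u) :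
    u - u^2/2 + u^3/3 - u^4/4 ≤ log (1+u) := by
  have h := mono_aux (φ := fun v => log (1+v) - (v - v^2/2 + v^3/3 - v^4/4))
    (φ' := fun t => 1/(1+t) - (1 - t + t^2 - t^3)) hu ?_ ?_
  · simpa using h
  · intro t ht
    have h1 : (0:ℝ) < 1 + t := by nlinarith [ht.1]
    have hp : HasDerivAt (fun v : ℝ => v - v^2/2 + v^3/3 - v^4/4)
        (1 - t + t^2 - t^3) t := by
      have := (((hasDerivAt_id t).sub ((hasDerivAt_pow 2 t).div_const 2)).add
        ((hasDerivAt_pow 3 t).div_const 3)).sub ((hasDerivAt_pow 4 t).div_const 4)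
      refine this.congr_deriv ?_; ring
    exact (hasDerivAt_log_one_add h1).sub hp
  · intro t ht
    have h1 : (0:ℝ) < 1 + t := by nlinarith [ht.1]
    have : 1 - t + t^2 - t^3 ≤ 1/(1+t) := by
      rw [le_div_iff₀ h1]; nlinarith [pow_nonneg ht.1.le 4]
    linarith

lemma atanh_low {z : ℝ} (h0 : 0 ≤ z) (h1 : z < 1) :
    2*(z + z^3/3 + z^5/5) ≤ log (1+z) - log (1-z) := by
  have h := mono_aux (φ := fun v => log (1+v) - log (1-v) - 2*(v + v^3/3 + v^5/5))
    (φ' := fun t => 1/(1+t) + 1/(1-t) - 2*(1 + t^2 + t^4)) h0 ?_ ?_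
  · simpa using h
  · intro t ht
    have ha : (0:ℝ) < 1 + t := by nlinarith [ht.1]
    have hb : (0:ℝ) < 1 - t := by nlinarith [ht.2, h1]
    have hp : HasDerivAt (fun v : ℝ => 2*(v + v^3/3 + v^5/5)) (2*(1 + t^2 + t^4)) t := by
      have := (((hasDerivAt_id t).add ((hasDerivAt_pow 3 t).div_const 3)).add
        ((hasDerivAt_pow 5 t).div_const 5)).const_mul 2
      refine this.congr_deriv ?_; ring
    have := ((hasDerivAt_log_one_add ha).sub (hasDerivAt_log_one_sub hb)).sub hp
    refine this.congr_deriv ?_; ring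
  · intro t ht
    have ha : (0:ℝ) < 1 + t := by nlinarith [ht.1]
    have hb : (0:ℝ) < 1 - t := by nlinarith [ht.2, h1]
    have e1 : 1/(1+t) + 1/(1-t) = 2/(1-t^2) := by
      rw [div_add_div _ _ ha.ne' hb.ne']; ring_nf
    have h2 : (0:ℝ) < 1 - t^2 := by nlinarith
    rw [e1]
    have : 2*(1 + t^2 + t^4) ≤ 2/(1-t^2) := by
      rw [le_div_iff₀ h2]; nlinarith [pow_nonneg ht.1.le 6]
    linarith

lemma atanh_up {z : ℝ} (h0 : 0 ≤ z) (h1 : z < 1) :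
    log (1+z) - log (1-z) ≤ 2*(z + z^3/3 + z^5/5) + 2*z^7/(7*(1-z^2)) := by
  have h := mono_aux
    (φ := fun v => 2*(v + v^3/3 + v^5/5) + 2*v^7/(7*(1-v^2)) - (log (1+v) - log (1-v)))
    (φ' := fun t => (4/7)*t^8/(1-t^2)^2) h0 ?_ ?_
  · simpa using h
  · intro t ht
    have ha : (0:ℝ) < 1 + t := by nlinarith [ht.1]
    have hb : (0:ℝ) < 1 - t := by nlinarith [ht.2, h1]
    have h2 : (0:ℝ) < 1 - t^2 := by nlinarith
    have hp : HasDerivAt (fun v : ℝ => 2*(v + v^3/3 + v^5/5)) (2*(1 + t^2 + t^4)) t := by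
      have := (((hasDerivAt_id t).add ((hasDerivAt_pow 3 t).div_const 3)).add
        ((hasDerivAt_pow 5 t).div_const 5)).const_mul 2
      refine this.congr_deriv ?_; ring
    have hq : HasDerivAt (fun v : ℝ => 2*v^7/(7*(1-v^2)))
        ((14*t^6*(7*(1-t^2)) - 2*t^7*(7*(-(2*t))))/(7*(1-t^2))^2) t := by
      have hnum : HasDerivAt (fun v : ℝ => 2*v^7) (14*t^6) t := by
        have := (hasDerivAt_pow 7 t).const_mul 2
        refine this.congr_deriv ?_; ring
      have hden : HasDerivAt (fun v : ℝ => 7*(1-v^2)) (7*(-(2*t))) t := by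
        have := ((hasDerivAt_pow 2 t).const_sub 1).const_mul 7
        refine this.congr_deriv ?_; ring
      exact hnum.div hden (by positivity)
    have := (hp.add hq).sub ((hasDerivAt_log_one_add ha).sub (hasDerivAt_log_one_sub hb))
    refine this.congr_deriv ?_
    field_simp
    ring
  · intro t ht
    positivity

noncomputable def gB (y : ℝ) : ℝ := (y + 1/2) * (Real.log (y+1) - Real.log y) - 1
noncomputable def fB (y : ℝ) : ℝ := 1/(12*y) - 1/(360*y^3)
noncomputable def FB (y : ℝ) : ℝ := 1/(12*y) - 1/(360*y^3) + 1/(1260*y^5)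

lemma cert_G1 {y : ℝ} (hy : 12 ≤ y) :
    fB y - fB (y+1) ≤ (1/(2*y+1))^2/3 + (1/(2*y+1))^4/5 := by
  obtain ⟨s, hs, rfl⟩ : ∃ s, 0 ≤ s ∧ y = 12 + s := ⟨y - 12, by linarith, by ring⟩
  rw [← sub_nonneg]
  have h1 : (0:ℝ) < 12 + s := by linarith
  have h2 : (0:ℝ) < 13 + s := by linarith
  have h3 : (0:ℝ) < 25 + 2*s := by linarith
  have key : (1/(2*(12+s)+1))^2/3 + (1/(2*(12+s)+1))^4/5 - (fB (12+s) - fB (12+s+1)) =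
      ((245077:ℝ) + s * ((78275:ℝ) + s * ((9381:ℝ) + s * ((500:ℝ) + s * ((10:ℝ)))))) / (8 * (45*(12+s)^3*(13+s)^3*(25+2*s)^4)) := by
    unfold fB
    field_simp
    ring
  rw [key]
  positivity

lemma cert_G2 {y : ℝ} (hy : 12 ≤ y) :
    (1/(2*y+1))^2/3 + (1/(2*y+1))^4/5 + (1/(2*y+1))^6/(7*(1-(1/(2*y+1))^2)) ≤
      FB y - FB (y+1) := by
  obtain ⟨s, hs, rfl⟩ : ∃ s, 0 ≤ s ∧ y = 12 + s := ⟨y - 12, by linarith, by ring⟩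
  rw [← sub_nonneg]
  have h1 : (0:ℝ) < 12 + s := by linarith
  have h2 : (0:ℝ) < 13 + s := by linarith
  have h3 : (0:ℝ) < 25 + 2*s := by linarith
  have hz : (1:ℝ) - (1/(2*(12+s)+1))^2 = (4*(12+s)*(13+s))/(25+2*s)^2 := by
    field_simp
    ring
  have hzpos : (0:ℝ) < 1 - (1/(2*(12+s)+1))^2 := by rw [hz]; positivity
  have key : FB (12+s) - FB (12+s+1) -
      ((1/(2*(12+s)+1))^2/3 + (1/(2*(12+s)+1))^4/5 +
        (1/(2*(12+s)+1))^6/(7*(1-(1/(2*(12+s)+1))^2))) =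
      ((388511566250:ℝ) + s * ((248665131850:ℝ) + s * ((69630489649:ℝ) + s * ((11141445125:ℝ) + s * ((1114189840:ℝ) + s * ((71310325:ℝ) + s * ((2852471:ℝ) + s * ((65200:ℝ) + s * ((652:ℝ)))))))))) / (2520*(12+s)^5*(13+s)^5*(25+2*s)^6) := by
    rw [hz]
    unfold FB
    field_simp
    ring
  rw [key]
  positivity

lemma gB_ge {y : ℝ} (hy : 12 ≤ y) : fB y - fB (y+1) ≤ gB y := by
  have hy0 : (0:ℝ) < y := by linarith
  set z : ℝ := 1/(2*y+1) with hzdef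
  have hz0 : 0 < z := by positivity
  have hz1 : z < 1 := by
    rw [hzdef, div_lt_one (by linarith)]; linarith
  have hlogeq : Real.log (1+z) - Real.log (1-z) = Real.log (y+1) - Real.log y := by
    have e1 : 1 + z = (2*y+2)/(2*y+1) := by rw [hzdef]; field_simp; ring
    have e2 : 1 - z = (2*y)/(2*y+1) := by rw [hzdef]; field_simp; ring
    rw [e1, e2, Real.log_div (by linarith) (by linarith),
      Real.log_div (by linarith) (by linarith),
      show (2:ℝ)*y+2 = 2*(y+1) by ring, Real.log_mul (by norm_num) (by linarith),
      Real.log_mul (by norm_num) hy0.ne']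
    ring
  have hmul : (y + 1/2) * (2*(z + z^3/3 + z^5/5)) - 1 = z^2/3 + z^4/5 := by
    rw [hzdef]
    field_simp
    ring
  have h1 := atanh_low hz0.le hz1
  have h2 := mul_le_mul_of_nonneg_left h1 (by linarith : (0:ℝ) ≤ y + 1/2)
  rw [hlogeq] at h2
  have h3 := cert_G1 hy
  rw [gB]
  rw [← hzdef] at h3
  linarith

lemma gB_le {y : ℝ} (hy : 12 ≤ y) : gB y ≤ FB y - FB (y+1) := by
  have hy0 : (0:ℝ) < y := by linarith
  set z : ℝ := 1/(2*y+1) with hzdef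
  have hz0 : 0 < z := by positivity
  have hz1 : z < 1 := by
    rw [hzdef, div_lt_one (by linarith)]; linarith
  have hz2 : (0:ℝ) < 1 - z^2 := by nlinarith
  have hlogeq : Real.log (1+z) - Real.log (1-z) = Real.log (y+1) - Real.log y := by
    have e1 : 1 + z = (2*y+2)/(2*y+1) := by rw [hzdef]; field_simp; ring
    have e2 : 1 - z = (2*y)/(2*y+1) := by rw [hzdef]; field_simp; ring
    rw [e1, e2, Real.log_div (by linarith) (by linarith),
      Real.log_div (by linarith) (by linarith),
      show (2:ℝ)*y+2 = 2*(y+1) by ring, Real.log_mul (by norm_num) (by linarith),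
      Real.log_mul (by norm_num) hy0.ne']
    ring
  have hkey : (2*y+1)*z = 1 := by
    rw [hzdef, mul_one_div, div_self (by linarith : (2:ℝ)*y+1 ≠ 0)]
  have hmul : (y + 1/2) * (2*(z + z^3/3 + z^5/5) + 2*z^7/(7*(1-z^2))) - 1 =
      z^2/3 + z^4/5 + z^6/(7*(1-z^2)) := by
    have expand : (y + 1/2) * (2*(z + z^3/3 + z^5/5) + 2*z^7/(7*(1-z^2))) - 1 =
        ((2*y+1)*z)*(1 + z^2/3 + z^4/5) + ((2*y+1)*z)*(z^6/(7*(1-z^2))) - 1 := by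
      ring
    rw [expand, hkey]
    ring
  have h1 := atanh_up hz0.le hz1
  have h2 := mul_le_mul_of_nonneg_left h1 (by linarith : (0:ℝ) ≤ y + 1/2)
  rw [hlogeq] at h2
  have h3 := cert_G2 hy
  rw [gB]
  rw [← hzdef] at h3
  linarith

lemma sum_gB_eq (x : ℝ) (N : ℕ) :
    ∑ k ∈ Finset.range N, gB (x+k) =
      (x + N + 1/2)*Real.log (x+N) - (x + 1/2)*Real.log x -
        (∑ k ∈ Finset.range N, Real.log (1+x+k)) - N := by
  induction N with
  | zero => simp
  | succ n ih =>
    rw [Finset.sum_range_succ, ih, Finset.sum_range_succ, gB]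
    push_cast
    ring_nf

lemma muB_recursion (x : ℝ) (hx : 0 < x) :
    Filter.Tendsto (fun N : ℕ => (Real.log (Real.Gamma x) - (x - 1/2)*Real.log x + x -
      Real.log (2*Real.pi)/2) - ∑ k ∈ Finset.range N, gB (x+k)) Filter.atTop (nhds 0) := by
  have hident : ∀ N : ℕ, 1 ≤ N →
      (Real.log (Real.Gamma x) - (x - 1/2)*Real.log x + x - Real.log (2*Real.pi)/2) -
        (∑ k ∈ Finset.range N, gB (x+k)) =
      (Real.log (Real.Gamma x) - Real.BohrMollerup.logGammaSeq x N) +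
        (Real.log (Stirling.stirlingSeq N) - Real.log (Real.sqrt Real.pi)) +
        (x - (x + N + 1/2)*(Real.log (x+N) - Real.log N)) := by
    intro N hN
    have hN0 : (0:ℝ) < N := by exact_mod_cast hN
    have hsc : ∑ k ∈ Finset.range N, Real.log (x+↑(k+1)) =
        ∑ k ∈ Finset.range N, Real.log (1+x+↑k) := by
      refine Finset.sum_congr rfl fun k _ => ?_
      congr 1
      push_cast
      ring
    rw [sum_gB_eq, Real.BohrMollerup.logGammaSeq, Finset.sum_range_succ', hsc,
      Stirling.log_stirlingSeq_formula]
    push_cast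
    rw [Real.log_div hN0.ne' (Real.exp_ne_zero 1), Real.log_exp,
      Real.log_mul two_ne_zero hN0.ne', Real.log_sqrt Real.pi_pos.le,
      Real.log_mul two_ne_zero Real.pi_pos.ne']
    ring_nf
  have T1 : Filter.Tendsto (fun N : ℕ => Real.log (Real.Gamma x) -
      Real.BohrMollerup.logGammaSeq x N) Filter.atTop (nhds 0) := by
    have := (Real.BohrMollerup.tendsto_log_gamma hx).const_sub (Real.log (Real.Gamma x))
    simpa using this
  have T2 : Filter.Tendsto (fun N : ℕ => Real.log (Stirling.stirlingSeq N) -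
      Real.log (Real.sqrt Real.pi)) Filter.atTop (nhds 0) := by
    have h := ((Real.continuousAt_log (Real.sqrt_pos.mpr Real.pi_pos).ne').tendsto.comp
      Stirling.tendsto_stirlingSeq_sqrt_pi).sub_const (Real.log (Real.sqrt Real.pi))
    simpa using h
  have T3 : Filter.Tendsto (fun N : ℕ => x - (x + N + 1/2)*(Real.log (x+N) - Real.log N))
      Filter.atTop (nhds 0) := by
    have hlog1 : Filter.Tendsto (fun N : ℕ => Real.log (1 + x/N)) Filter.atTop (nhds 0) := by
      have hx0 : Filter.Tendsto (fun N : ℕ => 1 + x/(N:ℝ)) Filter.atTop (nhds 1) := by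
        have := (tendsto_const_nhds (x := x)).div_atTop
          (tendsto_natCast_atTop_atTop (R := ℝ))
        simpa using (this.const_add 1)
      have := (Real.continuousAt_log one_ne_zero).tendsto.comp hx0
      simpa [Function.comp_def] using this
    have hmain : Filter.Tendsto (fun N : ℕ => (N:ℝ) * Real.log (1 + x/N))
        Filter.atTop (nhds x) :=
      (Real.tendsto_mul_log_one_add_div_atTop x).comp (tendsto_natCast_atTop_atTop (R := ℝ))
    have heq : ∀ᶠ N : ℕ in Filter.atTop,
        x - ((N:ℝ) * Real.log (1 + x/N) + (x + 1/2) * Real.log (1 + x/N)) =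
        x - (x + N + 1/2)*(Real.log (x+N) - Real.log N) := by
      filter_upwards [Filter.eventually_ge_atTop 1] with N hN
      have hN0 : (0:ℝ) < N := by exact_mod_cast hN
      have : Real.log (x+N) - Real.log N = Real.log (1 + x/N) := by
        rw [← Real.log_div (by positivity) hN0.ne']
        congr 1
        field_simp
        ring
      rw [this]; ring
    rw [show (0:ℝ) = x - (x + (x+1/2)*0) by ring]
    exact Filter.Tendsto.congr' heq
      (tendsto_const_nhds.sub (hmain.add (hlog1.const_mul (x+1/2))))
  have := (T1.add T2).add T3
  simp only [add_zero] at this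
  refine Filter.Tendsto.congr' ?_ this
  filter_upwards [Filter.eventually_ge_atTop 1] with N hN
  exact (hident N hN).symm

lemma fB_tendsto (x : ℝ) (hx : 0 < x) :
    Filter.Tendsto (fun N : ℕ => fB (x+N)) Filter.atTop (nhds 0) := by
  have hT : Filter.Tendsto (fun N : ℕ => x+(N:ℝ)) Filter.atTop Filter.atTop :=
    Filter.tendsto_atTop_add_const_left _ x tendsto_natCast_atTop_atTop
  have h1 : Filter.Tendsto (fun N : ℕ => 1/(12*(x+(N:ℝ)))) Filter.atTop (nhds 0) :=
    tendsto_const_nhds.div_atTop (hT.const_mul_atTop (by norm_num))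
  have h2 : Filter.Tendsto (fun N : ℕ => 1/(360*(x+(N:ℝ))^3)) Filter.atTop (nhds 0) :=
    tendsto_const_nhds.div_atTop
      (((Filter.tendsto_pow_atTop (by norm_num : (3:ℕ) ≠ 0)).comp hT).const_mul_atTop (by norm_num))
  have h0 := h1.sub h2
  rw [show (0:ℝ) - 0 = 0 by norm_num] at h0
  exact h0.congr fun N => by simp only [fB]

lemma FB_tendsto (x : ℝ) (hx : 0 < x) :
    Filter.Tendsto (fun N : ℕ => FB (x+N)) Filter.atTop (nhds 0) := by
  have hT : Filter.Tendsto (fun N : ℕ => x+(N:ℝ)) Filter.atTop Filter.atTop :=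
    Filter.tendsto_atTop_add_const_left _ x tendsto_natCast_atTop_atTop
  have h1 : Filter.Tendsto (fun N : ℕ => 1/(12*(x+(N:ℝ)))) Filter.atTop (nhds 0) :=
    tendsto_const_nhds.div_atTop (hT.const_mul_atTop (by norm_num))
  have h2 : Filter.Tendsto (fun N : ℕ => 1/(360*(x+(N:ℝ))^3)) Filter.atTop (nhds 0) :=
    tendsto_const_nhds.div_atTop
      (((Filter.tendsto_pow_atTop (by norm_num : (3:ℕ) ≠ 0)).comp hT).const_mul_atTop (by norm_num))
  have h3 : Filter.Tendsto (fun N : ℕ => 1/(1260*(x+(N:ℝ))^5)) Filter.atTop (nhds 0) :=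
    tendsto_const_nhds.div_atTop
      (((Filter.tendsto_pow_atTop (by norm_num : (5:ℕ) ≠ 0)).comp hT).const_mul_atTop (by norm_num))
  have h0 := (h1.sub h2).add h3
  rw [show (0:ℝ) - 0 + 0 = 0 by norm_num] at h0
  exact h0.congr fun N => by simp only [FB]

lemma mu_bounds {x : ℝ} (hx : 12 ≤ x) :
    fB x ≤ Real.log (Real.Gamma x) - (x - 1/2)*Real.log x + x - Real.log (2*Real.pi)/2 ∧
    Real.log (Real.Gamma x) - (x - 1/2)*Real.log x + x - Real.log (2*Real.pi)/2 ≤ FB x := by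
  have hx0 : (0:ℝ) < x := by linarith
  set M : ℝ := Real.log (Real.Gamma x) - (x - 1/2)*Real.log x + x - Real.log (2*Real.pi)/2
    with hM
  have hlow : ∀ N : ℕ, fB x - fB (x+N) ≤ ∑ k ∈ Finset.range N, gB (x+k) := by
    intro N
    induction N with
    | zero => simp
    | succ n ih =>
      rw [Finset.sum_range_succ]
      have h := gB_ge (by
        have : (0:ℝ) ≤ (n:ℝ) := Nat.cast_nonneg n
        linarith : (12:ℝ) ≤ x + n)
      have hcast : fB (x+((n:ℕ)+1:ℕ)) = fB (x+(n:ℝ)+1) := by push_cast; ring_nf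
      rw [hcast]
      linarith
  have hup : ∀ N : ℕ, ∑ k ∈ Finset.range N, gB (x+k) ≤ FB x - FB (x+N) := by
    intro N
    induction N with
    | zero => simp
    | succ n ih =>
      rw [Finset.sum_range_succ]
      have h := gB_le (by
        have : (0:ℝ) ≤ (n:ℝ) := Nat.cast_nonneg n
        linarith : (12:ℝ) ≤ x + n)
      have hcast : FB (x+((n:ℕ)+1:ℕ)) = FB (x+(n:ℝ)+1) := by push_cast; ring_nf
      rw [hcast]
      linarith
  have hten := muB_recursion x hx0
  rw [← hM] at hten
  constructor
  · have hc : Filter.Tendsto (fun N : ℕ => (M - fB x) + fB (x+N)) Filter.atTop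
        (nhds (M - fB x)) := by
      have := tendsto_const_nhds (x := M - fB x) (f := Filter.atTop (α := ℕ))
      simpa using this.add (fB_tendsto x hx0)
    have hle := le_of_tendsto_of_tendsto' hten hc (fun N => by
      have := hlow N
      linarith)
    linarith
  · have hc : Filter.Tendsto (fun N : ℕ => (M - FB x) + FB (x+N)) Filter.atTop
        (nhds (M - FB x)) := by
      have := tendsto_const_nhds (x := M - FB x) (f := Filter.atTop (α := ℕ))
      simpa using this.add (FB_tendsto x hx0)
    have hle := le_of_tendsto_of_tendsto' hc hten (fun N => by
      have := hup N
      linarith)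
    linarith

lemma polyA {t : ℝ} (h0 : 0 < t) (ht : t ≤ 1/12) :
    6*(t/12 - t^3/360 + t^5/1260) <
      (t/2+t^2/8+t^3/240) - (t/2+t^2/8+t^3/240)^2/2 + (t/2+t^2/8+t^3/240)^3/3
        - (t/2+t^2/8+t^3/240)^4/4 := by
  have hstep : ∀ i : ℕ, t^(i+1) ≤ (1/12) * t^i := by
    intro i
    calc t^(i+1) = t * t^i := by ring
    _ ≤ (1/12) * t^i := mul_le_mul_of_nonneg_right ht (pow_nonneg h0.le i)
  nlinarith [hstep 4, hstep 5, hstep 6, hstep 7, hstep 8, hstep 9, hstep 10, hstep 11,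
    pow_pos h0 4]

lemma polyB {t : ℝ} (h0 : 0 < t) (ht : t ≤ 1/12) :
    (t/2+t^2/8+t^3/240) - (t/2+t^2/8+t^3/240)^2/2 + (t/2+t^2/8+t^3/240)^3/3
        - (t/2+t^2/8+t^3/240)^4/4 + (t/2+t^2/8+t^3/240)^5/5 <
      6*(t/12 - t^3/360) + (66/11520)*t^4*(1+20*t) := by
  have hstep : ∀ i : ℕ, t^(i+1) ≤ (1/12) * t^i := by
    intro i
    calc t^(i+1) = t * t^i := by ring
    _ ≤ (1/12) * t^i := mul_le_mul_of_nonneg_right ht (pow_nonneg h0.le i)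
  nlinarith [hstep 5, hstep 6, hstep 7, hstep 8, hstep 9, hstep 10, hstep 11, hstep 12,
    hstep 13, hstep 14, pow_pos h0 5]

end Rmj


open Rmj in
theorem stmt_12 :
    ∀ x : ℝ, 12 ≤ x →
      Real.sqrt Real.pi * (x / Real.exp 1) ^ x *
            (8 * x ^ 3 + 4 * x ^ 2 + x + 1 / 30) ^ ((1 : ℝ) / 6) *
          Real.exp (-11 / (11520 * (x - 5) ^ 4)) < Real.Gamma (x + 1) ∧
        Real.Gamma (x + 1) <
          Real.sqrt Real.pi * (x / Real.exp 1) ^ x *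
            (8 * x ^ 3 + 4 * x ^ 2 + x + 1 / 30) ^ ((1 : ℝ) / 6) := by
  intro x hx
  have hx0 : (0:ℝ) < x := by linarith
  obtain ⟨u, hu⟩ : ∃ u : ℝ, u = 1/(2*x)+1/(8*x^2)+1/(240*x^3) := ⟨_, rfl⟩
  have hu0 : (0:ℝ) ≤ u := by rw [hu]; positivity
  have hPu : 8*x^3 + 4*x^2 + x + 1/30 = 8*x^3*(1+u) := by
    rw [hu]; field_simp; ring
  have h1u : (0:ℝ) < 1 + u := by linarith
  obtain ⟨hmu_low, hmu_up⟩ := mu_bounds hx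
  obtain ⟨M, hM⟩ : ∃ M : ℝ, M = Real.log (Real.Gamma x) - (x - 1/2)*Real.log x + x -
      Real.log (2*Real.pi)/2 := ⟨_, rfl⟩
  rw [← hM] at hmu_low hmu_up
  have hlog2pi : Real.log (2*Real.pi) = Real.log 2 + Real.log Real.pi :=
    Real.log_mul two_ne_zero Real.pi_pos.ne'
  have hGamma : Real.Gamma (x+1) =
      Real.exp (M + (x + 1/2)*Real.log x - x + Real.log (2*Real.pi)/2) := by
    rw [show M + (x + 1/2)*Real.log x - x + Real.log (2*Real.pi)/2 =
        Real.log x + Real.log (Real.Gamma x) by rw [hM]; ring]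
    rw [Real.exp_add, Real.exp_log hx0, Real.exp_log (Real.Gamma_pos_of_pos hx0),
      Real.Gamma_add_one hx0.ne']
  have hRHS : Real.sqrt Real.pi * (x / Real.exp 1) ^ x *
      (8 * x ^ 3 + 4 * x ^ 2 + x + 1 / 30) ^ ((1:ℝ)/6) =
      Real.exp (Real.log Real.pi/2 + x*(Real.log x - 1) +
        (Real.log 2/2 + Real.log x/2 + Real.log (1+u)/6)) := by
    have e1 : Real.sqrt Real.pi = Real.exp (Real.log Real.pi/2) := by
      rw [← Real.log_sqrt Real.pi_pos.le, Real.exp_log (Real.sqrt_pos.mpr Real.pi_pos)]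
    have e2 : (x / Real.exp 1) ^ x = Real.exp (x*(Real.log x - 1)) := by
      rw [Real.rpow_def_of_pos (div_pos hx0 (Real.exp_pos 1)),
        Real.log_div hx0.ne' (Real.exp_ne_zero 1), Real.log_exp]
      ring_nf
    have e3 : (8 * x ^ 3 + 4 * x ^ 2 + x + 1 / 30) ^ ((1:ℝ)/6) =
        Real.exp (Real.log 2/2 + Real.log x/2 + Real.log (1+u)/6) := by
      have hP : (0:ℝ) < 8 * x ^ 3 + 4 * x ^ 2 + x + 1 / 30 := by positivity
      rw [Real.rpow_def_of_pos hP, hPu]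
      rw [show (8:ℝ)*x^3*(1+u) = 2^3*x^3*(1+u) by norm_num]
      rw [Real.log_mul (by positivity) h1u.ne', Real.log_mul (by positivity) (by positivity),
        Real.log_pow, Real.log_pow]
      push_cast
      ring_nf
    rw [e1, e2, e3, ← Real.exp_add, ← Real.exp_add]
  obtain ⟨t, htdef⟩ : ∃ t : ℝ, t = 1/x := ⟨_, rfl⟩
  have ht0 : 0 < t := by rw [htdef]; positivity
  have ht12 : t ≤ 1/12 := by
    rw [htdef]
    exact one_div_le_one_div_of_le (by norm_num) hx
  have hEu : u = t/2+t^2/8+t^3/240 := by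
    rw [hu, htdef]; ring
  have hEf : fB x = t/12 - t^3/360 := by
    simp only [fB, htdef]; ring
  have hEF : FB x = t/12 - t^3/360 + t^5/1260 := by
    simp only [FB, htdef]; ring
  have h5 : (0:ℝ) < x - 5 := by linarith
  constructor
  · -- lower bound
    rw [hGamma, hRHS, ← Real.exp_add, Real.exp_lt_exp]
    have hB := polyB ht0 ht12
    rw [← hEu] at hB
    have haux : (66/11520)*t^4*(1+20*t) ≤ 6*(11/(11520*(x-5)^4)) := by
      rw [← sub_nonneg]
      have hkey : 6*(11/(11520*(x-5)^4)) - (66/11520)*t^4*(1+20*t) =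
          ((x^5 - (x+20)*(x-5)^4) * 66)/(11520*(x-5)^4*x^5) := by
        rw [htdef]
        field_simp
        ring
      rw [hkey]
      apply div_nonneg _ (by positivity)
      have hid : x^5 - (x+20)*(x-5)^4 =
          250*(x-12)^3+6500*(x-12)^2+57375*(x-12)+172000 := by ring
      have h12 : (0:ℝ) ≤ x - 12 := by linarith
      nlinarith [hid, pow_nonneg h12 3, sq_nonneg (x-12)]
    have hlog5 := log_le_poly5 hu0
    have hfb : Real.log (1+u)/6 - 11/(11520*(x-5)^4) < fB x := by
      rw [hEf]
      linarith
    rw [hlog2pi]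
    have hneg : -11 / (11520 * (x - 5) ^ 4) = -(11/(11520*(x-5)^4)) := by ring
    rw [hneg]
    linarith
  · -- upper bound
    rw [hGamma, hRHS, Real.exp_lt_exp]
    have hA := polyA ht0 ht12
    rw [← hEu, ← hEF] at hA
    have hlog4 := poly4_le_log hu0
    have hfb : FB x < Real.log (1+u)/6 := by linarith
    rw [hlog2pi]
    linarith
end

section
/- Let G₀(x) = 6(1 - x·ln(1+1/x)) + ln(Φ₀(x)/Φ₀(x+1)) with Φ₀(x) = x³ + x²/2 + x/8 + 1/240. Then for all x > 0, 11/(480x⁵) - 29/(336x⁶) < G₀(x) < 11/(480x⁵) - 29/(336x⁶) + 9031/(44800x⁷). -/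
open Real Filter Set Topology

noncomputable def fH : ℝ → ℝ := fun y =>
  6 * (1 - y * Real.log (1 + y⁻¹)) + Real.log (y^3 + y^2/2 + y/8 + 1/240)
    - Real.log (y^3 + 7/2*y^2 + 33/8*y + 391/240) - 11/(480*y^5) + 29/(336*y^6)

noncomputable def fH' : ℝ → ℝ := fun y =>
  (-6) * Real.log (1 + y⁻¹) + 6/(y+1) + (3*y^2 + y + 1/8)/(y^3 + y^2/2 + y/8 + 1/240)
    - (3*y^2 + 7*y + 33/8)/(y^3 + 7/2*y^2 + 33/8*y + 391/240) + 11/(96*y^6) - 29/(56*y^7)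

noncomputable def fH'' : ℝ → ℝ := fun y =>
  6/(y*(y+1)^2)
    + ((6*y+1)*(y^3 + y^2/2 + y/8 + 1/240) - (3*y^2 + y + 1/8)^2)/(y^3 + y^2/2 + y/8 + 1/240)^2
    - ((6*y+7)*(y^3 + 7/2*y^2 + 33/8*y + 391/240) - (3*y^2 + 7*y + 33/8)^2)/(y^3 + 7/2*y^2 + 33/8*y + 391/240)^2
    - 11/(16*y^7) + 29/(8*y^8)

noncomputable def fK : ℝ → ℝ := fun y => 9031/(44800*y^7) - fH y
noncomputable def fK' : ℝ → ℝ := fun y => -9031/(6400*y^8) - fH' y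
noncomputable def fK'' : ℝ → ℝ := fun y => 9031/(800*y^9) - fH'' y

lemma phiA_pos {x : ℝ} (hx : 0 < x) : 0 < x^3 + x^2/2 + x/8 + 1/240 := by positivity
lemma phiB_pos {x : ℝ} (hx : 0 < x) : 0 < x^3 + 7/2*x^2 + 33/8*x + 391/240 := by positivity

lemma hasDerivAt_fH {x : ℝ} (hx : 0 < x) : HasDerivAt fH (fH' x) x := by
  have hx0 : x ≠ 0 := ne_of_gt hx
  have h1 : (1 : ℝ) + x⁻¹ ≠ 0 := by positivity
  have hA0 : x^3 + x^2/2 + x/8 + 1/240 ≠ 0 := ne_of_gt (phiA_pos hx)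
  have hB0 : x^3 + 7/2*x^2 + 33/8*x + 391/240 ≠ 0 := ne_of_gt (phiB_pos hx)
  have hinv : HasDerivAt (fun y : ℝ => 1 + y⁻¹) (-(x^2)⁻¹) x := by
    simpa using (hasDerivAt_inv hx0).const_add (1 : ℝ)
  have hlog : HasDerivAt (fun y : ℝ => Real.log (1 + y⁻¹)) (-(x^2)⁻¹ / (1 + x⁻¹)) x :=
    hinv.log h1
  have hA : HasDerivAt (fun y : ℝ => y^3 + y^2/2 + y/8 + 1/240)
      (3*x^2 + x + 1/8) x := by
    have h := (((hasDerivAt_pow 3 x).add ((hasDerivAt_pow 2 x).div_const 2)).add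
      (((hasDerivAt_id' x).div_const 8))).add_const (1/240 : ℝ)
    refine h.congr_deriv ?_
    push_cast; ring
  have hB : HasDerivAt (fun y : ℝ => y^3 + 7/2*y^2 + 33/8*y + 391/240)
      (3*x^2 + 7*x + 33/8) x := by
    have h := (((hasDerivAt_pow 3 x).add (((hasDerivAt_pow 2 x).const_mul (7/2 : ℝ)))).add
      ((((hasDerivAt_id' x).const_mul (33/8 : ℝ))))).add_const (391/240 : ℝ)
    refine h.congr_deriv ?_
    push_cast; ring
  have h5 : (480 : ℝ) * x^5 ≠ 0 := by positivity
  have h6 : (336 : ℝ) * x^6 ≠ 0 := by positivity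
  have t1 : HasDerivAt (fun y : ℝ => 6 * (1 - y * Real.log (1 + y⁻¹)))
      (6 * (-(1 * Real.log (1 + x⁻¹) + x * (-(x^2)⁻¹ / (1 + x⁻¹))))) x :=
    (((hasDerivAt_id' x).mul hlog).const_sub 1).const_mul 6
  have t2 := hA.log hA0
  have t3 := hB.log hB0
  have t4 : HasDerivAt (fun y : ℝ => 11/(480*y^5))
      ((0 * (480*x^5) - 11 * (480 * (5*x^4))) / (480*x^5)^2) x := by
    refine (hasDerivAt_const x (11:ℝ)).div (((hasDerivAt_pow 5 x).const_mul 480)) h5 |>.congr_deriv ?_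
    push_cast; ring
  have t5 : HasDerivAt (fun y : ℝ => 29/(336*y^6))
      ((0 * (336*x^6) - 29 * (336 * (6*x^5))) / (336*x^6)^2) x := by
    refine (hasDerivAt_const x (29:ℝ)).div (((hasDerivAt_pow 6 x).const_mul 336)) h6 |>.congr_deriv ?_
    push_cast; ring
  have big := (((t1.add t2).sub t3).sub t4).add t5
  refine big.congr_deriv (Eq.symm ?_)
  show fH' x = _
  simp only [fH']
  field_simp
  ring

lemma hasDerivAt_fH' {x : ℝ} (hx : 0 < x) : HasDerivAt fH' (fH'' x) x := by
  have hx0 : x ≠ 0 := ne_of_gt hx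
  have h1 : (1 : ℝ) + x⁻¹ ≠ 0 := by positivity
  have hx1 : x + 1 ≠ 0 := by positivity
  have hA0 : x^3 + x^2/2 + x/8 + 1/240 ≠ 0 := ne_of_gt (phiA_pos hx)
  have hB0 : x^3 + 7/2*x^2 + 33/8*x + 391/240 ≠ 0 := ne_of_gt (phiB_pos hx)
  have hinv : HasDerivAt (fun y : ℝ => 1 + y⁻¹) (-(x^2)⁻¹) x := by
    simpa using (hasDerivAt_inv hx0).const_add (1 : ℝ)
  have hlog : HasDerivAt (fun y : ℝ => Real.log (1 + y⁻¹)) (-(x^2)⁻¹ / (1 + x⁻¹)) x :=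
    hinv.log h1
  have hA : HasDerivAt (fun y : ℝ => y^3 + y^2/2 + y/8 + 1/240)
      (3*x^2 + x + 1/8) x := by
    have h := (((hasDerivAt_pow 3 x).add ((hasDerivAt_pow 2 x).div_const 2)).add
      (((hasDerivAt_id' x).div_const 8))).add_const (1/240 : ℝ)
    refine h.congr_deriv ?_
    push_cast; ring
  have hB : HasDerivAt (fun y : ℝ => y^3 + 7/2*y^2 + 33/8*y + 391/240)
      (3*x^2 + 7*x + 33/8) x := by
    have h := (((hasDerivAt_pow 3 x).add (((hasDerivAt_pow 2 x).const_mul (7/2 : ℝ)))).add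
      ((((hasDerivAt_id' x).const_mul (33/8 : ℝ))))).add_const (391/240 : ℝ)
    refine h.congr_deriv ?_
    push_cast; ring
  have hpA : HasDerivAt (fun y : ℝ => 3*y^2 + y + 1/8) (6*x + 1) x := by
    have h := (((hasDerivAt_pow 2 x).const_mul (3:ℝ)).add (hasDerivAt_id' x)).add_const (1/8 : ℝ)
    refine h.congr_deriv ?_
    push_cast; ring
  have hpB : HasDerivAt (fun y : ℝ => 3*y^2 + 7*y + 33/8) (6*x + 7) x := by
    have h := (((hasDerivAt_pow 2 x).const_mul (3:ℝ)).add (((hasDerivAt_id' x).const_mul (7:ℝ)))).add_const (33/8 : ℝ)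
    refine h.congr_deriv ?_
    push_cast; ring
  have hx1' : HasDerivAt (fun y : ℝ => y + 1) 1 x := (hasDerivAt_id' x).add_const 1
  have h6 : (96 : ℝ) * x^6 ≠ 0 := by positivity
  have h7 : (56 : ℝ) * x^7 ≠ 0 := by positivity
  have t1 : HasDerivAt (fun y : ℝ => (-6 : ℝ) * Real.log (1 + y⁻¹))
      ((-6) * (-(x^2)⁻¹ / (1 + x⁻¹))) x := hlog.const_mul (-6)
  have t2 : HasDerivAt (fun y : ℝ => 6/(y+1)) ((0 * (x+1) - 6 * 1)/(x+1)^2) x :=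
    (hasDerivAt_const x (6:ℝ)).div hx1' hx1
  have t3 := hpA.div hA hA0
  have t4 := hpB.div hB hB0
  have t5 : HasDerivAt (fun y : ℝ => 11/(96*y^6))
      ((0 * (96*x^6) - 11 * (96 * (6*x^5))) / (96*x^6)^2) x := by
    refine (hasDerivAt_const x (11:ℝ)).div (((hasDerivAt_pow 6 x).const_mul 96)) h6 |>.congr_deriv ?_
    push_cast; ring
  have t6 : HasDerivAt (fun y : ℝ => 29/(56*y^7))
      ((0 * (56*x^7) - 29 * (56 * (7*x^6))) / (56*x^7)^2) x := by
    refine (hasDerivAt_const x (29:ℝ)).div (((hasDerivAt_pow 7 x).const_mul 56)) h7 |>.congr_deriv ?_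
    push_cast; ring
  have big := ((((t1.add t2).add t3).sub t4).add t5).sub t6
  refine big.congr_deriv (Eq.symm ?_)
  show fH'' x = _
  simp only [fH'']
  field_simp
  ring

lemma fHpp_pos {x : ℝ} (hx : 0 < x) : 0 < fH'' x := by
  have hx0 : x ≠ 0 := ne_of_gt hx
  have hx1 : x + 1 ≠ 0 := by positivity
  have hA0 : x^3 + x^2/2 + x/8 + 1/240 ≠ 0 := ne_of_gt (phiA_pos hx)
  have hB0 : x^3 + 7/2*x^2 + 33/8*x + 391/240 ≠ 0 := ne_of_gt (phiB_pos hx)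
  have key : fH'' x =
      (4433549/26542080000 + 7906411/707788800*x + 1162293823/4423680000*x^2
        + 148797620029/53084160000*x^3 + 1977761891/110592000*x^4 + 33576362287/442368000*x^5
        + 12469125769/55296000*x^6 + 529343689937/1105920000*x^7 + 41953357/57600*x^8
        + 3628944337/4608000*x^9 + 170086961/288000*x^10 + 1495447/5120*x^11
        + 2142/25*x^12 + 9031/800*x^13)
      / (x^8 * (x+1)^2 * (x^3 + x^2/2 + x/8 + 1/240)^2 * (x^3 + 7/2*x^2 + 33/8*x + 391/240)^2) := by
    simp only [fH'']
    field_simp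
    ring
  rw [key]
  positivity

lemma fKpp_pos {x : ℝ} (hx : 0 < x) : 0 < fK'' x := by
  have hx0 : x ≠ 0 := ne_of_gt hx
  have hx1 : x + 1 ≠ 0 := by positivity
  have hA0 : x^3 + x^2/2 + x/8 + 1/240 ≠ 0 := ne_of_gt (phiA_pos hx)
  have hB0 : x^3 + 7/2*x^2 + 33/8*x + 391/240 ≠ 0 := ne_of_gt (phiB_pos hx)
  have key : fK'' x =
      (1380668311/2654208000000 + 15358283327/442368000000*x + 2159637679261/2654208000000*x^2
        + 190722074047/22118400000*x^3 + 14484951111979/265420800000*x^4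
        + 1268301512167/5529600000*x^5 + 744529560881/1105920000*x^6
        + 389047376251/276480000*x^7 + 2321586809887/1105920000*x^8
        + 1274835557/576000*x^9 + 7414054091/4608000*x^10 + 44183843/57600*x^11
        + 1105481/5120*x^12 + 10883/400*x^13)
      / (x^9 * (x+1)^2 * (x^3 + x^2/2 + x/8 + 1/240)^2 * (x^3 + 7/2*x^2 + 33/8*x + 391/240)^2) := by
    simp only [fK'', fH'']
    field_simp
    ring
  rw [key]
  positivity

lemma cubic_tendsto (a b c d : ℝ) :
    Tendsto (fun y : ℝ => a + b*y⁻¹ + c*y⁻¹^2 + d*y⁻¹^3) atTop (𝓝 a) := by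
  have h : Tendsto (fun y : ℝ => y⁻¹) atTop (𝓝 0) := tendsto_inv_atTop_zero
  have : Tendsto (fun y : ℝ => a + b*y⁻¹ + c*y⁻¹^2 + d*y⁻¹^3) atTop
      (𝓝 (a + b*0 + c*0^2 + d*0^3)) :=
    ((((tendsto_const_nhds.add (h.const_mul b))).add ((h.pow 2).const_mul c)).add
      ((h.pow 3).const_mul d))
  simpa using this

lemma fH_tendsto : Tendsto fH atTop (𝓝 0) := by
  have p1 : Tendsto (fun y : ℝ => 6 * (1 - y * Real.log (1 + y⁻¹))) atTop (𝓝 (6 * (1 - 1))) := by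
    refine Tendsto.const_mul 6 (tendsto_const_nhds.sub ?_)
    have := Real.tendsto_mul_log_one_add_div_atTop 1
    simpa [one_div] using this
  have hratio : Tendsto (fun y : ℝ => (y^3 + y^2/2 + y/8 + 1/240)/(y^3 + 7/2*y^2 + 33/8*y + 391/240))
      atTop (𝓝 1) := by
    have h := (cubic_tendsto 1 (1/2) (1/8) (1/240)).div (cubic_tendsto 1 (7/2) (33/8) (391/240))
      one_ne_zero
    rw [show (1:ℝ)/1 = 1 by norm_num] at h
    refine h.congr' ?_
    filter_upwards [eventually_gt_atTop (0:ℝ)] with y hy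
    simp only [Pi.div_apply]
    have hy0 : y ≠ 0 := ne_of_gt hy
    have hB0 : y^3 + 7/2*y^2 + 33/8*y + 391/240 ≠ 0 := ne_of_gt (phiB_pos hy)
    field_simp
  have p2 : Tendsto (fun y : ℝ => Real.log (y^3 + y^2/2 + y/8 + 1/240)
      - Real.log (y^3 + 7/2*y^2 + 33/8*y + 391/240)) atTop (𝓝 0) := by
    have hc : Tendsto (fun y : ℝ => Real.log ((y^3 + y^2/2 + y/8 + 1/240)/(y^3 + 7/2*y^2 + 33/8*y + 391/240)))
        atTop (𝓝 0) := by
      have := (Real.continuousAt_log one_ne_zero).tendsto.comp hratio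
      simpa [Function.comp_def] using this
    refine hc.congr' ?_
    filter_upwards [eventually_gt_atTop (0:ℝ)] with y hy
    exact Real.log_div (ne_of_gt (phiA_pos hy)) (ne_of_gt (phiB_pos hy))
  have p3 : Tendsto (fun y : ℝ => 11/(480*y^5)) atTop (𝓝 0) := by
    have h := ((tendsto_inv_atTop_zero (𝕜 := ℝ)).pow 5).const_mul (11/480 : ℝ)
    rw [show (11/480 : ℝ) * 0^5 = 0 by norm_num] at h
    refine h.congr' ?_
    filter_upwards [eventually_gt_atTop (0:ℝ)] with y hy
    have hy0 : y ≠ 0 := ne_of_gt hy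
    field_simp
  have p4 : Tendsto (fun y : ℝ => 29/(336*y^6)) atTop (𝓝 0) := by
    have h := ((tendsto_inv_atTop_zero (𝕜 := ℝ)).pow 6).const_mul (29/336 : ℝ)
    rw [show (29/336 : ℝ) * 0^6 = 0 by norm_num] at h
    refine h.congr' ?_
    filter_upwards [eventually_gt_atTop (0:ℝ)] with y hy
    have hy0 : y ≠ 0 := ne_of_gt hy
    field_simp
  have h := (((p1.add p2).sub p3).add p4)
  rw [show (6*((1:ℝ)-1) + 0 - 0 + 0 : ℝ) = 0 by norm_num] at h
  exact h.congr (fun y => by simp only [fH]; try ring)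

lemma fH'_tendsto : Tendsto fH' atTop (𝓝 0) := by
  have hinv : Tendsto (fun y : ℝ => y⁻¹) atTop (𝓝 0) := tendsto_inv_atTop_zero
  have p1 : Tendsto (fun y : ℝ => (-6 : ℝ) * Real.log (1 + y⁻¹)) atTop (𝓝 0) := by
    have h1 : Tendsto (fun y : ℝ => 1 + y⁻¹) atTop (𝓝 1) := by
      have := tendsto_const_nhds (x := (1:ℝ)) (f := atTop) |>.add hinv
      simpa using this
    have := (Real.continuousAt_log one_ne_zero).tendsto.comp h1
    simp only [Real.log_one] at this
    have h2 := this.const_mul (-6 : ℝ)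
    simpa using h2
  have p2 : Tendsto (fun y : ℝ => 6/(y+1)) atTop (𝓝 0) := by
    have h := (tendsto_atTop_add_const_right atTop (1:ℝ) tendsto_id).inv_tendsto_atTop
    have h2 := h.const_mul (6:ℝ)
    rw [mul_zero] at h2
    refine h2.congr' ?_
    filter_upwards [eventually_gt_atTop (0:ℝ)] with y hy
    simp [div_eq_mul_inv, Function.comp]
  have p3 : Tendsto (fun y : ℝ => (3*y^2 + y + 1/8)/(y^3 + y^2/2 + y/8 + 1/240)) atTop (𝓝 0) := by
    have h := (cubic_tendsto 0 3 1 (1/8)).div (cubic_tendsto 1 (1/2) (1/8) (1/240)) one_ne_zero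
    rw [show (0:ℝ)/1 = 0 by norm_num] at h
    refine h.congr' ?_
    filter_upwards [eventually_gt_atTop (0:ℝ)] with y hy
    simp only [Pi.div_apply]
    have hy0 : y ≠ 0 := ne_of_gt hy
    have hA0 : y^3 + y^2/2 + y/8 + 1/240 ≠ 0 := ne_of_gt (phiA_pos hy)
    field_simp
    ring
  have p4 : Tendsto (fun y : ℝ => (3*y^2 + 7*y + 33/8)/(y^3 + 7/2*y^2 + 33/8*y + 391/240)) atTop (𝓝 0) := by
    have h := (cubic_tendsto 0 3 7 (33/8)).div (cubic_tendsto 1 (7/2) (33/8) (391/240)) one_ne_zero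
    rw [show (0:ℝ)/1 = 0 by norm_num] at h
    refine h.congr' ?_
    filter_upwards [eventually_gt_atTop (0:ℝ)] with y hy
    simp only [Pi.div_apply]
    have hy0 : y ≠ 0 := ne_of_gt hy
    have hB0 : y^3 + 7/2*y^2 + 33/8*y + 391/240 ≠ 0 := ne_of_gt (phiB_pos hy)
    field_simp
    ring
  have p5 : Tendsto (fun y : ℝ => 11/(96*y^6)) atTop (𝓝 0) := by
    have h := (hinv.pow 6).const_mul (11/96 : ℝ)
    rw [show (11/96 : ℝ) * 0^6 = 0 by norm_num] at h
    refine h.congr' ?_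
    filter_upwards [eventually_gt_atTop (0:ℝ)] with y hy
    have hy0 : y ≠ 0 := ne_of_gt hy
    field_simp
  have p6 : Tendsto (fun y : ℝ => 29/(56*y^7)) atTop (𝓝 0) := by
    have h := (hinv.pow 7).const_mul (29/56 : ℝ)
    rw [show (29/56 : ℝ) * 0^7 = 0 by norm_num] at h
    refine h.congr' ?_
    filter_upwards [eventually_gt_atTop (0:ℝ)] with y hy
    have hy0 : y ≠ 0 := ne_of_gt hy
    field_simp
  have h := ((((p1.add p2).add p3).sub p4).add p5).sub p6
  rw [show ((0:ℝ) + 0 + 0 - 0 + 0 - 0 : ℝ) = 0 by norm_num] at h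
  exact h.congr (fun y => by simp only [fH']; try ring)

lemma c7_tendsto (c k : ℝ) (n : ℕ) (hn : n ≠ 0) :
    Tendsto (fun y : ℝ => c/(k*y^n)) atTop (𝓝 0) := by
  rcases eq_or_ne k 0 with hk | hk
  · simpa [hk] using tendsto_const_nhds
  have h := ((tendsto_inv_atTop_zero (𝕜 := ℝ)).pow n).const_mul (c/k : ℝ)
  rw [show (c/k : ℝ) * 0^n = 0 by simp [zero_pow hn]] at h
  refine h.congr' ?_
  filter_upwards [eventually_gt_atTop (0:ℝ)] with y hy
  have hy0 : y ≠ 0 := ne_of_gt hy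
  field_simp
  rw [one_div, inv_pow, mul_assoc, inv_mul_cancel₀ (pow_ne_zero n hy0), mul_one]

lemma fK_tendsto : Tendsto fK atTop (𝓝 0) := by
  have h := (c7_tendsto 9031 44800 7 (by norm_num)).sub fH_tendsto
  rw [sub_zero] at h
  exact h

lemma fK'_tendsto : Tendsto fK' atTop (𝓝 0) := by
  have h := (c7_tendsto (-9031) 6400 8 (by norm_num)).sub fH'_tendsto
  rw [sub_zero] at h
  exact h

lemma hasDerivAt_fK {x : ℝ} (hx : 0 < x) : HasDerivAt fK (fK' x) x := by
  have hx0 : x ≠ 0 := ne_of_gt hx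
  have h7 : (44800 : ℝ) * x^7 ≠ 0 := by positivity
  have t : HasDerivAt (fun y : ℝ => 9031/(44800*y^7))
      ((0 * (44800*x^7) - 9031 * (44800 * (7*x^6))) / (44800*x^7)^2) x := by
    refine (hasDerivAt_const x (9031:ℝ)).div (((hasDerivAt_pow 7 x).const_mul 44800)) h7 |>.congr_deriv ?_
    push_cast; ring
  have big := t.sub (hasDerivAt_fH hx)
  refine big.congr_deriv (Eq.symm ?_)
  show fK' x = _
  simp only [fK']
  field_simp
  ring

lemma hasDerivAt_fK' {x : ℝ} (hx : 0 < x) : HasDerivAt fK' (fK'' x) x := by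
  have hx0 : x ≠ 0 := ne_of_gt hx
  have h8 : (6400 : ℝ) * x^8 ≠ 0 := by positivity
  have t : HasDerivAt (fun y : ℝ => -9031/(6400*y^8))
      ((0 * (6400*x^8) - (-9031) * (6400 * (8*x^7))) / (6400*x^8)^2) x := by
    refine (hasDerivAt_const x (-9031:ℝ)).div (((hasDerivAt_pow 8 x).const_mul 6400)) h8 |>.congr_deriv ?_
    push_cast; ring
  have big := t.sub (hasDerivAt_fH' hx)
  refine big.congr_deriv (Eq.symm ?_)
  show fK'' x = _
  simp only [fK'']
  field_simp
  ring

lemma convex_pos (f f' f'' : ℝ → ℝ)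
    (hd : ∀ x : ℝ, 0 < x → HasDerivAt f (f' x) x)
    (hd' : ∀ x : ℝ, 0 < x → HasDerivAt f' (f'' x) x)
    (hpos : ∀ x : ℝ, 0 < x → 0 < f'' x)
    (hlim : Tendsto f atTop (𝓝 0))
    (hlim' : Tendsto f' atTop (𝓝 0)) :
    ∀ x : ℝ, 0 < x → 0 < f x := by
  have mono : StrictMonoOn f' (Ioi 0) := by
    apply strictMonoOn_of_deriv_pos (convex_Ioi 0)
    · exact fun x hx => (hd' x hx).continuousAt.continuousWithinAt
    · intro x hx
      rw [interior_Ioi] at hx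
      rw [(hd' x hx).deriv]
      exact hpos x hx
  have hneg : ∀ x : ℝ, 0 < x → f' x < 0 := by
    intro x hx
    have h1 : f' x < f' (x + 1) :=
      mono (mem_Ioi.2 hx) (mem_Ioi.2 (by linarith)) (by linarith)
    have h2 : f' (x + 1) ≤ 0 := by
      refine ge_of_tendsto hlim' ?_
      filter_upwards [eventually_ge_atTop (x + 2)] with y hy
      exact (mono (mem_Ioi.2 (by linarith)) (mem_Ioi.2 (by linarith)) (by linarith)).le
    linarith
  have anti : StrictAntiOn f (Ioi 0) := by
    apply strictAntiOn_of_deriv_neg (convex_Ioi 0)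
    · exact fun x hx => (hd x hx).continuousAt.continuousWithinAt
    · intro x hx
      rw [interior_Ioi] at hx
      rw [(hd x hx).deriv]
      exact hneg x hx
  intro x hx
  have h1 : f (x + 1) < f x :=
    anti (mem_Ioi.2 hx) (mem_Ioi.2 (by linarith)) (by linarith)
  have h2 : 0 ≤ f (x + 1) := by
    refine le_of_tendsto hlim ?_
    filter_upwards [eventually_ge_atTop (x + 2)] with y hy
    exact (anti (mem_Ioi.2 (by linarith)) (mem_Ioi.2 (by linarith)) (by linarith)).le
  linarith

lemma fH_pos : ∀ x : ℝ, 0 < x → 0 < fH x :=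
  convex_pos fH fH' fH'' (fun _ h => hasDerivAt_fH h) (fun _ h => hasDerivAt_fH' h)
    (fun _ h => fHpp_pos h) fH_tendsto fH'_tendsto

lemma fK_pos : ∀ x : ℝ, 0 < x → 0 < fK x :=
  convex_pos fK fK' fK'' (fun _ h => hasDerivAt_fK h) (fun _ h => hasDerivAt_fK' h)
    (fun _ h => fKpp_pos h) fK_tendsto fK'_tendsto

theorem stmt_13 (Φ₀ G₀ : ℝ → ℝ)
    (hΦ : ∀ x : ℝ, Φ₀ x = x ^ 3 + x ^ 2 / 2 + x / 8 + 1 / 240)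
    (hG : ∀ x : ℝ, G₀ x = 6 * (1 - x * Real.log (1 + 1 / x)) +
      Real.log (Φ₀ x) - Real.log (Φ₀ (x + 1))) :
    ∀ x : ℝ, 0 < x →
      11 / (480 * x ^ 5) - 29 / (336 * x ^ 6) < G₀ x ∧
        G₀ x < 11 / (480 * x ^ 5) - 29 / (336 * x ^ 6) + 9031 / (44800 * x ^ 7) := by
  intro x hx
  have hH := fH_pos x hx
  have hK := fK_pos x hx
  have hEq : G₀ x = fH x + 11/(480*x^5) - 29/(336*x^6) := by
    rw [hG, hΦ, hΦ]
    simp only [fH]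
    rw [one_div]
    have hlog : Real.log ((x+1)^3 + (x+1)^2/2 + (x+1)/8 + 1/240)
        = Real.log (x^3 + 7/2*x^2 + 33/8*x + 391/240) := by
      congr 1
      ring
    rw [hlog]
    ring
  rw [fK] at hK
  constructor <;> [linarith; linarith]
end
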